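/- arXiv:1504.02387 — 4 statements merged into one kernel-verified Lean document; each statement's English description precedes it below -/
import Mathlib

section
/- In a standard monomial theory on a multiset with straightening relations for an algebra A, if every weakly standard monomial is standard and the ideal ℛ of relations (kernel of S(𝒜) → A) is homogeneous for the total degree of monomials, then ℛ is generated in degree two. -/
open MvPolynomial

/-- The data of a (candidate) standard monomial theory on a multiset
`𝒜 = 𝒜₁ ⊔ ⋯ ⊔ 𝒜ₙ` of elements of a commutative `k`-algebra `A`:  a finite index
type `ι` (the multiset), a shape map to `Fin n`, a realization `elem : ι → A`, a
binary relation `⟵` which is transitive and antisymmetric on each shape, and swap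
maps on comparable pairs satisfying `φ_{i,i} = Id` and `φ_{i,j} φ_{j,i} = Id`. -/
structure SMTData (k A : Type) [Field k] [CommRing A] [Algebra k A] where
  ι : Type
  [fin : Fintype ι]
  [dec : DecidableEq ι]
  n : ℕ
  shape : ι → Fin n
  elem : ι → A
  rel : ι → ι → Prop
  rel_trans : ∀ {i j l}, shape i = shape j → shape j = shape l → rel i j → rel j l → rel i l
  rel_antisymm : ∀ {i j}, shape i = shape j → rel i j → rel j i → i = j
  swap : ∀ i j, rel i j → ι × ι
  swap_shape1 : ∀ i j h, shape (swap i j h).1 = shape j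
  swap_shape2 : ∀ i j h, shape (swap i j h).2 = shape i
  swap_rel : ∀ i j h, rel (swap i j h).1 (swap i j h).2
  swap_id : ∀ i j h, shape i = shape j → swap i j h = (i, j)
  swap_invol : ∀ i j h, swap (swap i j h).1 (swap i j h).2 (swap_rel i j h) = (i, j)

attribute [instance] SMTData.fin SMTData.dec

namespace SMTData

variable {k A : Type} [Field k] [CommRing A] [Algebra k A] (D : SMTData k A)

/-- A formal monomial (a list of elements of the multiset) is weakly standard if
`a₁ ⟵ a₂ ⟵ ⋯ ⟵ a_N`. -/
def WeaklyStandardList (l : List D.ι) : Prop := l.Chain' D.rel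

/-- One swap of an adjacent comparable pair inside a formal monomial. -/
def Step (l l' : List D.ι) : Prop :=
  ∃ (p q : List D.ι) (i j : D.ι) (h : D.rel i j),
    l = p ++ i :: j :: q ∧ l' = p ++ (D.swap i j h).1 :: (D.swap i j h).2 :: q

/-- A formal monomial is standard if its shape is non-decreasing and every
monomial obtained from it by repeatedly swapping adjacent comparable pairs is
weakly standard. -/
def StandardList (l : List D.ι) : Prop :=
  (l.map D.shape).Chain' (· ≤ ·) ∧
  ∀ l', Relation.ReflTransGen D.Step l l' → D.WeaklyStandardList l'

/-- The commutative monomial (exponent vector) associated with a formal monomial. -/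
noncomputable def toMon (l : List D.ι) : D.ι →₀ ℕ := Multiset.toFinsupp (↑l)

/-- A commutative monomial is standard if it is the image of a standard formal
monomial. -/
def StandardMon (m : D.ι →₀ ℕ) : Prop := ∃ l, D.StandardList l ∧ D.toMon l = m

/-- A formal monomial is minimally non-standard if it is not standard but every
proper subsequence of it is standard. -/
def MinNonStdList (l : List D.ι) : Prop :=
  ¬ D.StandardList l ∧ ∀ l', l'.Sublist l → l' ≠ l → D.StandardList l'

/-- A commutative monomial is minimally non-standard if it is the image of a
minimally non-standard formal monomial. -/
def MinNonStdMon (m : D.ι →₀ ℕ) : Prop := ∃ l, D.MinNonStdList l ∧ D.toMon l = m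

/-- The value in `A` of a commutative monomial in the elements of the multiset. -/
noncomputable def evalMon (m : D.ι →₀ ℕ) : A := m.prod fun i e => D.elem i ^ e

/-- The natural map from the symmetric algebra `S(𝒜)` (a polynomial ring on the
multiset) to `A`. -/
noncomputable def π : MvPolynomial D.ι k →ₐ[k] A := aeval D.elem

/-- The data form a standard monomial theory for `A` if the images in `A` of the
standard monomials are distinct and form a basis of `A` as a `k`-vector space
(both conditions are encoded by linear independence of the family together with
the spanning property). -/
def IsSMT : Prop :=
  LinearIndependent k (fun m : {m : D.ι →₀ ℕ // D.StandardMon m} => D.evalMon m.1) ∧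
  Submodule.span k (Set.range fun m : {m : D.ι →₀ ℕ // D.StandardMon m} => D.evalMon m.1) = ⊤

/-- An order on commutative monomials as in the abstract standard monomial theory:
a partial order, compatible with multiplication, with finite up-sets. -/
structure MonomialOrder (mle : (D.ι →₀ ℕ) → (D.ι →₀ ℕ) → Prop) : Prop where
  refl : ∀ m, mle m m
  trans : ∀ {m₁ m₂ m₃}, mle m₁ m₂ → mle m₂ m₃ → mle m₁ m₃
  antisymm : ∀ {m₁ m₂}, mle m₁ m₂ → mle m₂ m₁ → m₁ = m₂
  mul_compat : ∀ (m : D.ι →₀ ℕ) {m₁ m₂}, mle m₁ m₂ → mle (m + m₁) (m + m₂)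
  finite_up : ∀ m, {m' | mle m m'}.Finite

/-- `str` assigns to each non-standard monomial a straightening relation: it is
expressed in `A` as a linear combination of standard monomials `m` with `m' ≤ m`. -/
def IsStraightening (mle : (D.ι →₀ ℕ) → (D.ι →₀ ℕ) → Prop)
    (str : (D.ι →₀ ℕ) → ((D.ι →₀ ℕ) →₀ k)) : Prop :=
  ∀ m', ¬ D.StandardMon m' →
    (∀ m ∈ (str m').support, D.StandardMon m ∧ mle m' m) ∧
    D.evalMon m' = (str m').sum fun m c => c • D.evalMon m

/-- The element of the symmetric algebra encoding the straightening relation of a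
non-standard monomial `m'`. -/
noncomputable def relPoly (str : (D.ι →₀ ℕ) → ((D.ι →₀ ℕ) →₀ k)) (m' : D.ι →₀ ℕ) :
    MvPolynomial D.ι k :=
  monomial m' 1 - (str m').sum fun m c => monomial m c

end SMTData

section Helpers

/-- Inserting an element comparable with everything into a chain. -/
private lemma ins_lemma {α : Type} (r : α → α → Prop) (x : α) (c : List α)
    (hch : c.Chain' r) (hcmp : ∀ y ∈ c, r x y ∨ r y x) :
    ∃ d : List α, d.Perm (x :: c) ∧ d.Chain' r ∧
      ∀ z, d.head? = some z → z = x ∨ c.head? = some z := by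
  induction c with
  | nil => exact ⟨[x], List.Perm.refl _, List.isChain_singleton x, by simp⟩
  | cons y c ih =>
    rcases hcmp y (by simp) with h | h
    · exact ⟨x :: y :: c, List.Perm.refl _, List.isChain_cons_cons.mpr ⟨h, hch⟩,
        by intro z hz; simp at hz; subst hz; exact Or.inl rfl⟩
    · obtain ⟨d, hdp, hdc, hdh⟩ := ih hch.tail
        (fun z hz => hcmp z (List.mem_cons_of_mem _ hz))
      refine ⟨y :: d, ?_, ?_, ?_⟩
      · exact (hdp.cons y).trans (List.Perm.swap x y c)
      · apply List.isChain_cons.mpr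
        refine ⟨?_, hdc⟩
        intro b hb
        rcases hdh b hb with rfl | hb'
        · exact h
        · exact (List.isChain_cons.mp hch).1 b hb'
      · intro z hz
        simp only [List.head?_cons, Option.some.injEq] at hz ⊢
        exact Or.inr hz

/-- Every "tournament-like" list admits a Hamiltonian chain reordering. -/
private lemma ham_lemma {α : Type} (r : α → α → Prop) (l : List α)
    (hcmp : ∀ a b : α, ({a, b} : Multiset α) ≤ ↑l → r a b ∨ r b a) :
    ∃ c : List α, c.Perm l ∧ c.Chain' r := by
  induction l with
  | nil => exact ⟨[], List.Perm.refl _, List.isChain_nil⟩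
  | cons x t ih =>
    obtain ⟨c, hcp, hcc⟩ := ih (fun a b hab => hcmp a b
      (hab.trans (by rw [← Multiset.cons_coe]; exact Multiset.le_cons_self _ _)))
    have hcmp' : ∀ y ∈ c, r x y ∨ r y x := by
      intro y hy
      apply hcmp x y
      have hyt : y ∈ (↑t : Multiset α) := by
        rw [Multiset.mem_coe]
        exact (hcp.mem_iff).mp hy
      rw [← Multiset.cons_coe, Multiset.insert_eq_cons]
      exact Multiset.cons_le_cons x (Multiset.singleton_le.mpr hyt)
    obtain ⟨d, hdp, hdc, -⟩ := ins_lemma r x c hcc hcmp'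
    exact ⟨d, hdp.trans (hcp.cons x), hdc⟩

private lemma perm_pair {α : Type} {l : List α} {a b : α} (h : l.Perm [a, b]) :
    l = [a, b] ∨ l = [b, a] := by
  have hlen := h.length_eq
  match l, h, hlen with
  | [x, y], h, _ =>
    have hx : x ∈ [a, b] := h.subset (by simp)
    rcases List.mem_pair.mp hx with rfl | rfl
    · left
      have := List.perm_singleton.mp (h.cons_inv)
      rw [this]
    · right
      have h' : [x, y].Perm [x, a] := h.trans (List.Perm.swap x a [])
      have := List.perm_singleton.mp (h'.cons_inv)
      rw [this]

variable {k A : Type} [Field k] [CommRing A] [Algebra k A] (D : SMTData k A)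

private lemma smt_std_iff (hws : ∀ l : List D.ι, D.WeaklyStandardList l → D.StandardList l)
    (m : D.ι →₀ ℕ) : D.StandardMon m ↔ ∃ l : List D.ι, l.Chain' D.rel ∧ D.toMon l = m := by
  constructor
  · rintro ⟨l, hl, rfl⟩
    exact ⟨l, hl.2 l Relation.ReflTransGen.refl, rfl⟩
  · rintro ⟨l, hl, rfl⟩
    exact ⟨l, hws l hl, rfl⟩

private lemma smt_exists_bad_pair
    (hws : ∀ l : List D.ι, D.WeaklyStandardList l → D.StandardList l)
    {m : D.ι →₀ ℕ} (hm : ¬ D.StandardMon m) :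
    ∃ a b : D.ι, ¬ D.StandardMon (D.toMon [a, b]) ∧ D.toMon [a, b] ≤ m := by
  classical
  by_contra hcon
  push_neg at hcon
  set l : List D.ι := (Finsupp.toMultiset m).toList with hldef
  have hl : D.toMon l = m := by
    show Multiset.toFinsupp (↑((Finsupp.toMultiset m).toList)) = m
    rw [Multiset.coe_toList, Finsupp.toMultiset_toFinsupp]
  apply hm
  rw [smt_std_iff D hws]
  have hcomp : ∀ a b : D.ι, ({a, b} : Multiset D.ι) ≤ ↑l → D.rel a b ∨ D.rel b a := by
    intro a b hab
    have hco : (↑[a, b] : Multiset D.ι) = ({a, b} : Multiset D.ι) := rfl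
    have h2 : D.toMon [a, b] ≤ m := by
      rw [← hl]
      apply Multiset.toFinsupp_strictMono.monotone
      rw [hco]
      exact hab
    have hstd2 : D.StandardMon (D.toMon [a, b]) := by
      by_contra hns
      exact (hcon a b hns) h2
    rw [smt_std_iff D hws] at hstd2
    obtain ⟨l₂, hl₂c, hl₂⟩ := hstd2
    have hperm : l₂.Perm [a, b] := by
      rw [← Multiset.coe_eq_coe]
      exact Multiset.toFinsupp.injective hl₂
    rcases perm_pair hperm with rfl | rfl
    · exact Or.inl (List.isChain_cons_cons.mp hl₂c).1
    · exact Or.inr (List.isChain_cons_cons.mp hl₂c).1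
  obtain ⟨c, hcp, hcc⟩ := ham_lemma D.rel l hcomp
  refine ⟨c, hcc, ?_⟩
  rw [← hl]
  simp only [SMTData.toMon]
  rw [Multiset.coe_eq_coe.mpr hcp]

private lemma smt_pi_monomial (m : D.ι →₀ ℕ) (c : k) :
    D.π (monomial m c) = c • D.evalMon m := by
  rw [SMTData.π, aeval_monomial, Algebra.smul_def]
  rfl

private lemma smt_stdker (hSMT : D.IsSMT) (p : MvPolynomial D.ι k)
    (hsupp : ∀ m ∈ p.support, D.StandardMon m) (hp : D.π p = 0) : p = 0 := by
  classical
  have hli := linearIndependent_iff'.mp hSMT.1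
  set s : Finset {m : D.ι →₀ ℕ // D.StandardMon m} :=
    p.support.attach.image (fun m => ⟨m.1, hsupp m.1 m.2⟩) with hs
  have hinj : ∀ x ∈ p.support.attach, ∀ y ∈ p.support.attach,
      (⟨x.1, hsupp x.1 x.2⟩ : {m : D.ι →₀ ℕ // D.StandardMon m})
        = ⟨y.1, hsupp y.1 y.2⟩ → x = y := by
    intro x _ y _ hxy
    exact Subtype.ext (Subtype.mk_eq_mk.mp hxy)
  have hsum : ∑ i ∈ s, coeff i.1 p • D.evalMon i.1 = 0 := by
    rw [hs, Finset.sum_image hinj]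
    rw [Finset.sum_attach p.support (fun m => coeff m p • D.evalMon m)]
    rw [← hp, SMTData.π, aeval_def, eval₂_eq]
    apply Finset.sum_congr rfl
    intro m _
    rw [Algebra.smul_def]
    rfl
  have hz := hli s (fun i => coeff i.1 p) hsum
  apply MvPolynomial.ext
  intro m
  rw [coeff_zero]
  by_cases hm : m ∈ p.support
  · exact hz ⟨m, hsupp m hm⟩ (Finset.mem_image.mpr ⟨⟨m, hm⟩, Finset.mem_attach _ _, rfl⟩)
  · exact notMem_support_iff.mp hm

private lemma smt_coeff_strSum (f : (D.ι →₀ ℕ) →₀ k) (m : D.ι →₀ ℕ) :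
    coeff m (f.sum fun m' c => (monomial m' c : MvPolynomial D.ι k)) = f m := by
  classical
  rw [Finsupp.sum, coeff_sum]
  simp only [coeff_monomial]
  rw [Finset.sum_ite_eq' f.support m (fun m' => f m')]
  by_cases hm : m ∈ f.support
  · rw [if_pos hm]
  · rw [if_neg hm, eq_comm]
    exact Finsupp.notMem_support_iff.mp hm

private lemma smt_coeff_relPoly (str : (D.ι →₀ ℕ) → ((D.ι →₀ ℕ) →₀ k))
    (m' m : D.ι →₀ ℕ) :
    coeff m (D.relPoly str m') = (if m' = m then 1 else 0) - (str m') m := by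
  rw [SMTData.relPoly, coeff_sub, coeff_monomial, smt_coeff_strSum]

private lemma smt_pi_relPoly (mle : (D.ι →₀ ℕ) → (D.ι →₀ ℕ) → Prop)
    (str : (D.ι →₀ ℕ) → ((D.ι →₀ ℕ) →₀ k))
    (hstr : D.IsStraightening mle str) {m' : D.ι →₀ ℕ} (h : ¬ D.StandardMon m') :
    D.π (D.relPoly str m') = 0 := by
  have h2 := (hstr m' h).2
  rw [SMTData.relPoly, map_sub, smt_pi_monomial, one_smul, Finsupp.sum, map_sum, h2,
    Finsupp.sum, sub_eq_zero]
  apply Finset.sum_congr rfl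
  intro m _
  rw [smt_pi_monomial]

end Helpers

/-- **Corollary (generation in degree two).**
In a standard monomial theory on a multiset with straightening relations for an
algebra `A`, if every weakly standard formal monomial is standard, and the ideal
`ℛ` of relations (the kernel of `S(𝒜) → A`) is homogeneous for the total degree
of monomials, then `ℛ` is generated in degree two, i.e. it is generated by its
homogeneous elements of degree `2`. -/
theorem kernel_generated_in_degree_two
    {k A : Type} [Field k] [CommRing A] [Algebra k A] (D : SMTData k A)
    (mle : (D.ι →₀ ℕ) → (D.ι →₀ ℕ) → Prop) (hord : D.MonomialOrder mle)
    (str : (D.ι →₀ ℕ) → ((D.ι →₀ ℕ) →₀ k))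
    (hSMT : D.IsSMT) (hstr : D.IsStraightening mle str)
    (hws : ∀ l : List D.ι, D.WeaklyStandardList l → D.StandardList l)
    (hhom : ∀ p ∈ RingHom.ker D.π, ∀ i : ℕ,
      MvPolynomial.homogeneousComponent i p ∈ RingHom.ker D.π) :
    RingHom.ker D.π =
      Ideal.span {p : MvPolynomial D.ι k |
        p ∈ RingHom.ker D.π ∧ p.IsHomogeneous 2} := by
  classical
  set J : Ideal (MvPolynomial D.ι k) := Ideal.span {p : MvPolynomial D.ι k |
      p ∈ RingHom.ker D.π ∧ p.IsHomogeneous 2} with hJ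
  have hJker : J ≤ RingHom.ker D.π := Ideal.span_le.mpr (fun p hp => hp.1)
  have hsmulJ : ∀ (c : k) (x : MvPolynomial D.ι k), x ∈ J → c • x ∈ J := by
    intro c x hx
    rw [smul_eq_C_mul]
    exact Ideal.mul_mem_left _ _ hx
  have hkerpi : ∀ x : MvPolynomial D.ι k, x ∈ RingHom.ker D.π ↔ D.π x = 0 := by
    intro x
    exact RingHom.mem_ker
  -- key reduction lemma
  have key : ∀ m' : D.ι →₀ ℕ, ∃ q : MvPolynomial D.ι k,
      (∀ m ∈ q.support, D.StandardMon m) ∧ ((monomial m' 1 : MvPolynomial D.ι k) - q) ∈ J := by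
    set N : (D.ι →₀ ℕ) → ℕ := fun m => (hord.finite_up m).toFinset.card with hNdef
    have hlt : ∀ {m t : D.ι →₀ ℕ}, mle m t → t ≠ m → N t < N m := by
      intro m t hmt hne
      apply Finset.card_lt_card
      rw [Set.Finite.toFinset_ssubset_toFinset]
      constructor
      · intro x hx
        exact hord.trans hmt hx
      · intro hsub
        exact hne (hord.antisymm (hsub (hord.refl m)) hmt)
    suffices H : ∀ n (m' : D.ι →₀ ℕ), N m' < n → ∃ q : MvPolynomial D.ι k,
        (∀ m ∈ q.support, D.StandardMon m) ∧ ((monomial m' 1 : MvPolynomial D.ι k) - q) ∈ J by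
      intro m'
      exact H (N m' + 1) m' (Nat.lt_succ_self _)
    intro n
    induction n with
    | zero => exact fun m' h => absurd h (Nat.not_lt_zero _)
    | succ n ih =>
      intro m' hm'n
      by_cases hstd : D.StandardMon m'
      · refine ⟨monomial m' 1, ?_, by rw [sub_self]; exact J.zero_mem⟩
        intro m hm
        rw [support_monomial, if_neg (one_ne_zero)] at hm
        rw [Finset.mem_singleton.mp hm]
        exact hstd
      · obtain ⟨a, b, hbad, hle⟩ := smt_exists_bad_pair D hws hstd
        set m₂ : D.ι →₀ ℕ := D.toMon [a, b] with hm₂def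
        set r : D.ι →₀ ℕ := m' - m₂ with hrdef
        have hr : r + m₂ = m' := tsub_add_cancel_of_le hle
        have hstr2 := hstr m₂ hbad
        have hdeg : m₂.degree = 2 := by
          have h1 : m₂.degree = Multiset.card (↑[a, b] : Multiset D.ι) := by
            rw [← Multiset.toFinsupp_sum_eq]
            rfl
          rw [h1, Multiset.coe_card]
          rfl
        have hkerrel : D.relPoly str m₂ ∈ RingHom.ker D.π := by
          rw [hkerpi]
          exact smt_pi_relPoly D mle str hstr hbad
        have hcomp : ∀ d : ℕ, d ≠ 2 →
            (homogeneousComponent d (D.relPoly str m₂) : MvPolynomial D.ι k) = 0 := by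
          intro d hd
          apply smt_stdker D hSMT
          · intro m hm
            rw [mem_support_iff, coeff_homogeneousComponent] at hm
            split_ifs at hm with hmd
            · have hne : m₂ ≠ m := by
                intro he
                rw [← he, hdeg] at hmd
                exact hd hmd.symm
              rw [smt_coeff_relPoly, if_neg hne, zero_sub, neg_ne_zero] at hm
              exact (hstr2.1 m (Finsupp.mem_support_iff.mpr hm)).1
            · exact absurd rfl hm
          · rw [← hkerpi]
            exact hhom _ hkerrel d
        have hhomog : (D.relPoly str m₂).IsHomogeneous 2 := by
          intro d hd
          rw [show ((Finsupp.weight 1) d : ℕ) = d.degree from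
            (DFunLike.congr_fun Finsupp.degree_eq_weight_one d).symm]
          by_contra hne
          apply hd
          have : coeff d (D.relPoly str m₂)
              = coeff d (homogeneousComponent d.degree (D.relPoly str m₂)) := by
            rw [coeff_homogeneousComponent, if_pos rfl]
          rw [this, hcomp d.degree hne, coeff_zero]
        have hrelJ : D.relPoly str m₂ ∈ J := Ideal.subset_span ⟨hkerrel, hhomog⟩
        have h1 : (monomial m' 1 : MvPolynomial D.ι k)
            - monomial r 1 * ((str m₂).sum fun m c => monomial m c) ∈ J := by
          have he : (monomial m' 1 : MvPolynomial D.ι k)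
              - monomial r 1 * ((str m₂).sum fun m c => monomial m c)
              = monomial r 1 * D.relPoly str m₂ := by
            rw [SMTData.relPoly, mul_sub, monomial_mul, mul_one, hr]
          rw [he]
          exact Ideal.mul_mem_left _ _ hrelJ
        have hIH : ∀ m ∈ (str m₂).support, ∃ q : MvPolynomial D.ι k,
            (∀ mm ∈ q.support, D.StandardMon mm)
              ∧ ((monomial (r + m) 1 : MvPolynomial D.ι k) - q) ∈ J := by
          intro m hm
          obtain ⟨hmstd, hmle⟩ := hstr2.1 m hm
          have hne : m ≠ m₂ := fun h => hbad (h ▸ hmstd)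
          have hmlt : N (r + m) < N m' := by
            apply hlt
            · rw [← hr]
              exact hord.mul_compat r hmle
            · intro h
              rw [← hr] at h
              exact hne (add_left_cancel h)
          exact ih (r + m) (lt_of_lt_of_le hmlt (Nat.lt_succ_iff.mp hm'n))
        choose q hq1 hq2 using hIH
        refine ⟨∑ m ∈ (str m₂).support.attach, (str m₂) m.1 • q m.1 m.2, ?_, ?_⟩
        · intro mm hmm
          rw [mem_support_iff] at hmm
          rw [coeff_sum] at hmm
          obtain ⟨m, hmem, hne⟩ := Finset.exists_ne_zero_of_sum_ne_zero hmm
          rw [coeff_smul, smul_eq_mul] at hne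
          have : coeff mm (q m.1 m.2) ≠ 0 := fun h => hne (by rw [h, mul_zero])
          exact hq1 m.1 m.2 mm (mem_support_iff.mpr this)
        · have hS : (monomial r 1 : MvPolynomial D.ι k)
              * ((str m₂).sum fun m c => monomial m c)
              = ∑ m ∈ (str m₂).support.attach,
                  (str m₂) m.1 • (monomial (r + m.1) 1 : MvPolynomial D.ι k) := by
            rw [Finsupp.sum, Finset.mul_sum,
              ← Finset.sum_attach (str m₂).support
                (fun m => (monomial r 1 : MvPolynomial D.ι k) * monomial m ((str m₂) m))]
            apply Finset.sum_congr rfl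
            intro m _
            rw [monomial_mul, one_mul, smul_monomial, smul_eq_mul, mul_one]
          have he : (monomial m' 1 : MvPolynomial D.ι k)
              - ∑ m ∈ (str m₂).support.attach, (str m₂) m.1 • q m.1 m.2
              = ((monomial m' 1 : MvPolynomial D.ι k)
                  - monomial r 1 * ((str m₂).sum fun m c => monomial m c))
                + ∑ m ∈ (str m₂).support.attach,
                    (str m₂) m.1 • ((monomial (r + m.1) 1 : MvPolynomial D.ι k) - q m.1 m.2) := by
            simp only [smul_sub, Finset.sum_sub_distrib, hS]
            abel
          rw [he]
          exact J.add_mem h1 (Ideal.sum_mem _ (fun m _ => hsmulJ _ _ (hq2 m.1 m.2)))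
  -- main argument
  refine le_antisymm ?_ (Ideal.span_le.mpr (fun p hp => hp.1))
  intro p hp
  choose Q hQ1 hQ2 using key
  set g : MvPolynomial D.ι k := ∑ m ∈ p.support, (coeff m p) • Q m with hgdef
  have hpg : p - g ∈ J := by
    have hp' : p - g = ∑ m ∈ p.support,
        (coeff m p) • ((monomial m 1 : MvPolynomial D.ι k) - Q m) := by
      simp only [smul_sub, Finset.sum_sub_distrib]
      congr 1
      conv_lhs => rw [← support_sum_monomial_coeff p]
      apply Finset.sum_congr rfl
      intro m _
      rw [smul_monomial, smul_eq_mul, mul_one]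
    rw [hp']
    exact Ideal.sum_mem _ (fun m _ => hsmulJ _ _ (hQ2 m))
  have hgker : g ∈ RingHom.ker D.π := by
    have h2 : p - (p - g) ∈ RingHom.ker D.π :=
      Ideal.sub_mem _ hp (hJker hpg)
    rwa [sub_sub_cancel] at h2
  have hg0 : g = 0 := by
    apply smt_stdker D hSMT
    · intro m hm
      rw [mem_support_iff, hgdef, coeff_sum] at hm
      obtain ⟨m', _, hne⟩ := Finset.exists_ne_zero_of_sum_ne_zero hm
      rw [coeff_smul, smul_eq_mul] at hne
      have : coeff m (Q m') ≠ 0 := fun h => hne (by rw [h, mul_zero])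
      exact hQ1 m' m (mem_support_iff.mpr this)
    · exact RingHom.mem_ker.mp hgker
  have hfin : p = p - g := by rw [hg0, sub_zero]
  rw [hfin]
  exact hpg
end

section
/- Let R ∈ T(k) and S ∈ T(h) be rows with R ⟵ S and k ≤ h. Then the set of subrows S' of S of shape k with R ⟵ S' has a minimum S⁰ with respect to ⟵, and the set of rows R' of shape h containing R with R' ⟵ S has a maximum R⁰ with respect to ⟵. Moreover R⁰ ⟵ S⁰ and R⁰ ∪ S⁰ = R ∪ S as multisets of entries. -/
namespace Rows

/-- A row of shape `k` for the parameter `ℓ`: a strictly increasing list of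
integers in `{1, …, ℓ+1}` (its shape is its length). -/
def IsRow (ℓ : ℕ) (R : List ℕ) : Prop :=
  R.Chain' (· < ·) ∧ ∀ x ∈ R, 1 ≤ x ∧ x ≤ ℓ + 1

/-- The relation `⟵` on rows: align the rows to the left if the first has shape
greater than or equal to that of the second, and to the right otherwise, and
require the entries in each common column to be non-decreasing. -/
def rowRel (R S : List ℕ) : Prop :=
  if S.length ≤ R.length then ∀ t < S.length, R.getD t 0 ≤ S.getD t 0
  else ∀ t < R.length, R.getD t 0 ≤ S.getD (S.length - R.length + t) 0

/-- The characterization of the swap maps `φ_{k,h}(R,S) = (R⁰,S⁰)` on a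
comparable pair `R ⟵ S` of rows of shapes `k, h`.  For `k ≤ h`: `S⁰` is the
`⟵`-minimal shape-`k` subrow of `S` with `R ⟵ S⁰` and `R⁰` is the `⟵`-maximal
shape-`h` row containing `R` with `R⁰ ⟵ S`; for `k ≥ h` the definitions are
dual. -/
def SwapSpec (ℓ : ℕ) (R S Rn Sn : List ℕ) : Prop :=
  if R.length ≤ S.length then
    (Sn.Sublist S ∧ Sn.length = R.length ∧ rowRel R Sn ∧
      ∀ S', S'.Sublist S → S'.length = R.length → rowRel R S' → rowRel Sn S') ∧
    (R.Sublist Rn ∧ Rn.length = S.length ∧ IsRow ℓ Rn ∧ rowRel Rn S ∧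
      ∀ R', R.Sublist R' → R'.length = S.length → IsRow ℓ R' → rowRel R' S → rowRel R' Rn)
  else
    (Rn.Sublist R ∧ Rn.length = S.length ∧ rowRel Rn S ∧
      ∀ R', R'.Sublist R → R'.length = S.length → rowRel R' S → rowRel R' Rn) ∧
    (S.Sublist Sn ∧ Sn.length = R.length ∧ IsRow ℓ Sn ∧ rowRel R Sn ∧
      ∀ S', S.Sublist S' → S'.length = R.length → IsRow ℓ S' → rowRel R S' → rowRel Sn S')

/-- A tableau (a list of rows) is weakly standard if each row is `⟵`-less than
or equal to the next one. -/
def WeaklyStdTab (T : List (List ℕ)) : Prop := T.Chain' rowRel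

/-- One application of a swap map to an adjacent comparable pair of rows of a
tableau. -/
def TabStep (ℓ : ℕ) (T T' : List (List ℕ)) : Prop :=
  ∃ p q R S Rn Sn, rowRel R S ∧ SwapSpec ℓ R S Rn Sn ∧
    T = p ++ R :: S :: q ∧ T' = p ++ Rn :: Sn :: q

/-- A tableau is standard if all tableaux obtained from it by repeatedly
applying swap maps to adjacent comparable pairs of rows are weakly standard. -/
def StdTab (ℓ : ℕ) (T : List (List ℕ)) : Prop :=
  ∀ T', Relation.ReflTransGen (TabStep ℓ) T T' → WeaklyStdTab T'

end Rows

open List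

/-- The swap function: given `R` and `S`, produce `(S⁰, R⁰)`. -/
private def swapF : List ℕ → List ℕ → List ℕ × List ℕ
  | [], S => ([], S)
  | _ :: _, [] => ([], [])
  | r :: R, s :: S =>
    if r ≤ s then (s :: (swapF R S).1, r :: (swapF R S).2)
    else ((swapF (r :: R) S).1, s :: (swapF (r :: R) S).2)
termination_by R S => S.length

private lemma getD_le_getD {A : List ℕ} (hA : A.Pairwise (· < ·)) {i j : ℕ}
    (hij : i ≤ j) (hj : j < A.length) : A.getD i 0 ≤ A.getD j 0 := by
  rcases eq_or_lt_of_le hij with rfl | h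
  · exact le_rfl
  · rw [List.getD_eq_getElem A 0 (lt_trans h hj), List.getD_eq_getElem A 0 hj]
    exact le_of_lt (List.pairwise_iff_getElem.mp hA i j (lt_trans h hj) hj h)

private lemma swapF_spec (S : List ℕ) : ∀ R : List ℕ, R.Pairwise (· < ·) → S.Pairwise (· < ·) →
    R.length ≤ S.length →
    (∀ t < R.length, R.getD t 0 ≤ S.getD (S.length - R.length + t) 0) →
    (swapF R S).1.Sublist S ∧
    (swapF R S).1.length = R.length ∧
    (∀ t < R.length, R.getD t 0 ≤ (swapF R S).1.getD t 0) ∧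
    (∀ S'' : List ℕ, S''.Sublist S → S''.length = R.length →
      (∀ t < R.length, R.getD t 0 ≤ S''.getD t 0) →
      ∀ t < R.length, (swapF R S).1.getD t 0 ≤ S''.getD t 0) ∧
    R.Sublist (swapF R S).2 ∧
    (swapF R S).2.length = S.length ∧
    (swapF R S).2.Pairwise (· < ·) ∧
    (∀ x ∈ (swapF R S).2, x ∈ R ∨ x ∈ S) ∧
    (∀ t < S.length, (swapF R S).2.getD t 0 ≤ S.getD t 0) ∧
    (∀ R'' : List ℕ, R.Sublist R'' → R''.length = S.length → R''.Pairwise (· < ·) →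
      (∀ t < S.length, R''.getD t 0 ≤ S.getD t 0) →
      ∀ t < S.length, R''.getD t 0 ≤ (swapF R S).2.getD t 0) ∧
    (∀ t < R.length, (swapF R S).2.getD t 0 ≤ (swapF R S).1.getD t 0) ∧
    ((swapF R S).2 ++ (swapF R S).1) ~ (R ++ S) := by
  induction S with
  | nil =>
    intro R _ _ hlen _
    have hRnil : R = [] := List.eq_nil_of_length_eq_zero (Nat.le_zero.mp hlen)
    subst hRnil
    refine ⟨?_, ?_, ?_, ?_, ?_, ?_, ?_, ?_, ?_, ?_, ?_, ?_⟩ <;> simp [swapF]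
  | cons s S' IH =>
    intro R hR hS hlen hfeas
    cases R with
    | nil =>
      have hsw : swapF [] (s :: S') = ([], s :: S') := by rw [swapF]
      simp only [hsw]
      refine ⟨nil_sublist _, by simp, by simp, ?_, nil_sublist _, by simp, hS,
        fun x hx => Or.inr hx, fun t _ => le_rfl, ?_, by simp, by simp⟩
      · intro S'' _ _ _ t ht; simp at ht
      · intro R'' _ _ _ hdom t ht; exact hdom t ht
    | cons r R' =>
      have hRht := (List.pairwise_cons.mp hR).1
      have hR' := (List.pairwise_cons.mp hR).2
      have hSht := (List.pairwise_cons.mp hS).1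
      have hS' := (List.pairwise_cons.mp hS).2
      by_cases hrs : r ≤ s
      · -- match branch
        have hsw : swapF (r :: R') (s :: S') = (s :: (swapF R' S').1, r :: (swapF R' S').2) := by
          rw [swapF, if_pos hrs]
        have hlen' : R'.length ≤ S'.length := by
          simp only [List.length_cons] at hlen; omega
        have hfeas' : ∀ t < R'.length, R'.getD t 0 ≤ S'.getD (S'.length - R'.length + t) 0 := by
          intro t ht
          have h0 := hfeas (t + 1) (by simp; omega)
          have hidx : (s :: S').length - (r :: R').length + (t + 1)
              = (S'.length - R'.length + t) + 1 := by simp; omega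
          rwa [hidx, List.getD_cons_succ, List.getD_cons_succ] at h0
        obtain ⟨h1, h2, h3, h4, h5, h6, h7, h8, h9, h10, h11, h12⟩ :=
          IH R' hR' hS' hlen' hfeas'
        set A := (swapF R' S').1 with hA
        set B := (swapF R' S').2 with hB
        simp only [hsw]
        refine ⟨h1.cons₂ s, by simp [h2], ?_, ?_, h5.cons₂ r, by simp [h6], ?_, ?_, ?_, ?_, ?_, ?_⟩
        · -- R ≤ S0 pointwise
          intro t ht
          cases t with
          | zero => simpa using hrs
          | succ t =>
            rw [List.getD_cons_succ, List.getD_cons_succ]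
            exact h3 t (by simp at ht; omega)
        · -- minimality of S0
          intro S'' hsub hlenS hdom t ht
          cases hsub with
          | cons _ h =>
            rcases S'' with _ | ⟨y, tl⟩
            · simp at hlenS
            · have hyS' : y ∈ S' := h.subset (List.mem_cons_self (a := y) (l := tl))
              cases t with
              | zero => simpa using le_of_lt (hSht y hyS')
              | succ t =>
                rw [List.getD_cons_succ, List.getD_cons_succ]
                refine h4 tl ((List.sublist_cons_self y tl).trans h)
                  (by simpa using hlenS) ?_ t (by simp at ht; omega)
                intro u hu
                have := hdom (u + 1) (by simp; omega)
                rwa [List.getD_cons_succ, List.getD_cons_succ] at this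
          | cons_cons _ h =>
            rename_i tl
            cases t with
            | zero => simp
            | succ t =>
              rw [List.getD_cons_succ, List.getD_cons_succ]
              refine h4 tl h (by simpa using hlenS) ?_ t (by simp at ht; omega)
              intro u hu
              have := hdom (u + 1) (by simp; omega)
              rwa [List.getD_cons_succ, List.getD_cons_succ] at this
        · -- R0 sorted
          refine List.pairwise_cons.mpr ⟨?_, h7⟩
          intro y hy
          rcases h8 y hy with h | h
          · exact hRht y h
          · exact lt_of_le_of_lt hrs (hSht y h)
        · -- membership
          intro x hx
          rcases List.mem_cons.mp hx with rfl | hx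
          · exact Or.inl (List.mem_cons_self (a := x) (l := R'))
          · rcases h8 x hx with h | h
            · exact Or.inl (List.mem_cons_of_mem r h)
            · exact Or.inr (List.mem_cons_of_mem s h)
        · -- R0 ≤ S pointwise
          intro t ht
          cases t with
          | zero => simpa using hrs
          | succ t =>
            rw [List.getD_cons_succ, List.getD_cons_succ]
            exact h9 t (by simp at ht; omega)
        · -- maximality of R0
          intro R'' hsubR hlenR hpwR hdomR t ht
          rcases R'' with _ | ⟨x, tl⟩
          · simp at hlenR
          · have hrmem : r ∈ x :: tl := hsubR.subset (List.mem_cons_self (a := r) (l := R'))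
            have htl : R' <+ tl := by
              cases hsubR with
              | cons _ h => exact (List.sublist_cons_self r R').trans h
              | cons_cons _ h => exact h
            cases t with
            | zero =>
              rcases List.mem_cons.mp hrmem with h | h
              · simpa using le_of_eq h.symm
              · simpa using le_of_lt ((List.pairwise_cons.mp hpwR).1 r h)
            | succ t =>
              rw [List.getD_cons_succ, List.getD_cons_succ]
              refine h10 tl htl (by simpa using hlenR) (List.pairwise_cons.mp hpwR).2 ?_
                t (by simp at ht; omega)
              intro u hu
              have := hdomR (u + 1) (by simp; omega)
              rwa [List.getD_cons_succ, List.getD_cons_succ] at this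
        · -- R0 ≤ S0 left aligned
          intro t ht
          cases t with
          | zero => simpa using hrs
          | succ t =>
            rw [List.getD_cons_succ, List.getD_cons_succ]
            exact h11 t (by simp at ht; omega)
        · -- permutation
          calc (r :: B) ++ (s :: A) = r :: (B ++ s :: A) := rfl
            _ ~ r :: (s :: (B ++ A)) := (List.perm_middle).cons r
            _ ~ r :: (s :: (R' ++ S')) := ((h12.cons s).cons r)
            _ ~ r :: (R' ++ s :: S') := (List.perm_middle.symm).cons r
            _ = (r :: R') ++ (s :: S') := rfl
      · -- skip branch
        have hsw : swapF (r :: R') (s :: S') = ((swapF (r :: R') S').1, s :: (swapF (r :: R') S').2) := by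
          rw [swapF, if_neg hrs]
        have hk : (r :: R').length ≤ S'.length := by
          by_contra hc
          have he : R'.length = S'.length := by
            simp only [List.length_cons] at hlen hc ⊢; omega
          have h0 := hfeas 0 (by simp)
          have hidx : (s :: S').length - (r :: R').length + 0 = 0 := by simp; omega
          rw [hidx] at h0
          simp at h0
          exact hrs h0
        have hfeas'' : ∀ t < (r :: R').length,
            (r :: R').getD t 0 ≤ S'.getD (S'.length - (r :: R').length + t) 0 := by
          intro t ht
          have h0 := hfeas t ht
          have hidx : (s :: S').length - (r :: R').length + t
              = (S'.length - (r :: R').length + t) + 1 := by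
            simp only [List.length_cons] at ht hk ⊢; omega
          rwa [hidx, List.getD_cons_succ] at h0
        obtain ⟨h1, h2, h3, h4, h5, h6, h7, h8, h9, h10, h11, h12⟩ :=
          IH (r :: R') hR hS' hk hfeas''
        set A := (swapF (r :: R') S').1 with hA
        set B := (swapF (r :: R') S').2 with hB
        have hApw : A.Pairwise (· < ·) := hS'.sublist h1
        simp only [hsw]
        refine ⟨h1.trans (List.sublist_cons_self s S'), h2, h3, ?_,
          h5.cons s, by simp [h6], ?_, ?_, ?_, ?_, ?_, ?_⟩
        · -- minimality of S0
          intro S'' hsub hlenS hdom t ht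
          cases hsub with
          | cons _ h => exact h4 S'' h hlenS hdom t ht
          | cons_cons _ h =>
            exfalso
            have := hdom 0 (by simp)
            simp at this
            exact hrs this
        · -- R0 sorted
          refine List.pairwise_cons.mpr ⟨?_, h7⟩
          intro y hy
          rcases h8 y hy with h | h
          · rcases List.mem_cons.mp h with rfl | h
            · omega
            · exact lt_trans (by omega) (hRht y h)
          · exact hSht y h
        · -- membership
          intro x hx
          rcases List.mem_cons.mp hx with rfl | hx
          · exact Or.inr (List.mem_cons_self (a := x) (l := S'))
          · rcases h8 x hx with h | h
            · exact Or.inl h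
            · exact Or.inr (List.mem_cons_of_mem s h)
        · -- R0 ≤ S pointwise
          intro t ht
          cases t with
          | zero => simp
          | succ t =>
            rw [List.getD_cons_succ, List.getD_cons_succ]
            exact h9 t (by simp at ht; omega)
        · -- maximality of R0
          intro R'' hsubR hlenR hpwR hdomR t ht
          rcases R'' with _ | ⟨x, tl⟩
          · simp at hlenR
          · cases t with
            | zero =>
              have := hdomR 0 (by simp)
              simpa using this
            | succ t =>
              have htl : (r :: R') <+ tl := by
                cases hsubR with
                | cons _ h => exact h
                | cons_cons _ h =>
                  exfalso
                  have := hdomR 0 (by simp)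
                  simp at this
                  exact hrs this
              rw [List.getD_cons_succ, List.getD_cons_succ]
              refine h10 tl htl (by simpa using hlenR) (List.pairwise_cons.mp hpwR).2 ?_
                t (by simp at ht; omega)
              intro u hu
              have := hdomR (u + 1) (by simp; omega)
              rwa [List.getD_cons_succ, List.getD_cons_succ] at this
        · -- R0 ≤ S0 left aligned
          intro t ht
          cases t with
          | zero =>
            have hA0 : A.getD 0 0 ∈ A := by
              rw [List.getD_eq_getElem A 0 (by rw [h2]; simpa using ht)]
              exact List.getElem_mem _
            have : A.getD 0 0 ∈ S' := h1.subset hA0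
            simpa using le_of_lt (hSht _ this)
          | succ t =>
            rw [List.getD_cons_succ]
            refine le_trans (h11 t (by simp at ht ⊢; omega)) ?_
            exact getD_le_getD hApw (Nat.le_succ t) (by rw [h2]; simpa using ht)
        · -- permutation
          calc (s :: B) ++ A = s :: (B ++ A) := rfl
            _ ~ s :: ((r :: R') ++ S') := h12.cons s
            _ ~ (r :: R') ++ (s :: S') := List.perm_middle.symm

open Rows in
private lemma rowRel_of_len_le {A B : List ℕ} (h : B.length ≤ A.length)
    (hd : ∀ t < B.length, A.getD t 0 ≤ B.getD t 0) : rowRel A B := by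
  unfold rowRel
  rw [if_pos h]
  exact hd

open Rows in
private lemma rowRel_elim_len_le {A B : List ℕ} (h : B.length ≤ A.length)
    (hr : rowRel A B) : ∀ t < B.length, A.getD t 0 ≤ B.getD t 0 := by
  unfold rowRel at hr
  rwa [if_pos h] at hr

open Rows in
/-- **(Existence of the swaps.)**  Let `R ∈ T(k)` and `S ∈ T(h)` be rows with
`R ⟵ S` and `k ≤ h`.  Then the set of subrows `S'` of `S` of shape `k` with
`R ⟵ S'` has a `⟵`-minimum `S⁰`, the set of rows `R'` of shape `h` containing
`R` with `R' ⟵ S` has a `⟵`-maximum `R⁰`, and moreover `R⁰ ⟵ S⁰` and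
`R⁰ ∪ S⁰ = R ∪ S` as multisets of entries. -/
theorem swap_exists (ℓ k h : ℕ) (R S : List ℕ)
    (hR : IsRow ℓ R) (hS : IsRow ℓ S) (hk : R.length = k) (hh : S.length = h)
    (hkh : k ≤ h) (hRS : rowRel R S) :
    ∃ S0 R0 : List ℕ,
      -- S⁰ is the ⟵-minimum of the shape-k subrows S' of S with R ⟵ S'
      (S0.Sublist S ∧ S0.length = k ∧ rowRel R S0 ∧
        ∀ S', S'.Sublist S → S'.length = k → rowRel R S' → rowRel S0 S') ∧
      -- R⁰ is the ⟵-maximum of the shape-h rows R' containing R with R' ⟵ S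
      (R.Sublist R0 ∧ R0.length = h ∧ IsRow ℓ R0 ∧ rowRel R0 S ∧
        ∀ R', R.Sublist R' → R'.length = h → IsRow ℓ R' → rowRel R' S → rowRel R' R0) ∧
      -- R⁰ ⟵ S⁰
      rowRel R0 S0 ∧
      -- R⁰ ∪ S⁰ = R ∪ S with multiplicities
      (↑R0 + ↑S0 : Multiset ℕ) = ↑R + ↑S := by
  subst hk hh
  have hRpw : R.Pairwise (· < ·) := List.isChain_iff_pairwise.mp hR.1
  have hSpw : S.Pairwise (· < ·) := List.isChain_iff_pairwise.mp hS.1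
  have hfeas : ∀ t < R.length, R.getD t 0 ≤ S.getD (S.length - R.length + t) 0 := by
    unfold rowRel at hRS
    by_cases hc : S.length ≤ R.length
    · rw [if_pos hc] at hRS
      intro t ht
      have hidx : S.length - R.length + t = t := by omega
      rw [hidx]
      exact hRS t (by omega)
    · rw [if_neg hc] at hRS
      exact hRS
  obtain ⟨h1, h2, h3, h4, h5, h6, h7, h8, h9, h10, h11, h12⟩ :=
    swapF_spec S R hRpw hSpw hkh hfeas
  refine ⟨(swapF R S).1, (swapF R S).2, ⟨h1, h2, ?_, ?_⟩, ⟨h5, h6, ⟨?_, ?_⟩, ?_, ?_⟩, ?_, ?_⟩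
  · exact rowRel_of_len_le h2.le (by rw [h2]; exact h3)
  · intro S' hsub hlenS hrr
    refine rowRel_of_len_le (by omega) ?_
    intro t ht
    exact h4 S' hsub hlenS
      (fun u hu => rowRel_elim_len_le hlenS.le hrr u (by omega)) t (by omega)
  · exact List.isChain_iff_pairwise.mpr h7
  · intro x hx
    rcases h8 x hx with hx' | hx'
    · exact hR.2 x hx'
    · exact hS.2 x hx'
  · exact rowRel_of_len_le h6.ge h9
  · intro R' hsub hlenR hrow hrr
    refine rowRel_of_len_le (by omega) ?_
    intro t ht
    exact h10 R' hsub hlenR (List.isChain_iff_pairwise.mp hrow.1)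
      (rowRel_elim_len_le hlenR.ge hrr) t (by omega)
  · exact rowRel_of_len_le (by omega) (fun t ht => h11 t (by omega))
  · calc (↑(swapF R S).2 + ↑(swapF R S).1 : Multiset ℕ)
        = ↑((swapF R S).2 ++ (swapF R S).1) := (Multiset.coe_add _ _)
      _ = ↑(R ++ S) := Multiset.coe_eq_coe.mpr h12
      _ = ↑R + ↑S := (Multiset.coe_add _ _).symm
end

section
/- With φ_{k,h}(R,S) = (R⁰,S⁰) defined for comparable pairs R ⟵ S of rows of shapes k and h, the swap maps satisfy φ_{k,k} = Id and φ_{h,k} ∘ φ_{k,h} = Id. -/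
namespace SwapProof
open List Rows

def swapPair : List ℕ → List ℕ → List ℕ × List ℕ
  | [], S => (S, [])
  | r :: R, [] => (r :: R, [])
  | r :: R, s :: S =>
    if r ≤ s then ((swapPair R S).1.cons r, (swapPair R S).2.cons s)
    else ((swapPair (r :: R) S).1.cons s, (swapPair (r :: R) S).2)

@[simp] lemma swapPair_nil_left (S : List ℕ) : swapPair [] S = (S, []) := by
  cases S <;> rfl

@[simp] lemma swapPair_nil_right (L : List ℕ) : swapPair L [] = (L, []) := by
  cases L <;> rfl

lemma swapPair_le {r s : ℕ} (R S : List ℕ) (h : r ≤ s) :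
    swapPair (r :: R) (s :: S) = ((swapPair R S).1.cons r, (swapPair R S).2.cons s) := by
  rw [swapPair, if_pos h]

lemma swapPair_gt {r s : ℕ} (R S : List ℕ) (h : ¬ r ≤ s) :
    swapPair (r :: R) (s :: S) = ((swapPair (r :: R) S).1.cons s, (swapPair (r :: R) S).2) := by
  rw [swapPair, if_neg h]

/-- A1 -/
lemma snd_sublist : ∀ (S L : List ℕ), (swapPair L S).2.Sublist S := by
  intro S
  induction S with
  | nil => intro L; simp
  | cons s S ih =>
    intro L
    cases L with
    | nil => simp
    | cons r R =>
      by_cases h : r ≤ s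
      · rw [swapPair_le _ _ h]; exact (ih R).cons₂ s
      · rw [swapPair_gt _ _ h]; exact (ih (r :: R)).cons s

/-- A2 -/
lemma sublist_fst : ∀ (S L : List ℕ), L.Sublist (swapPair L S).1 := by
  intro S
  induction S with
  | nil => intro L; simp
  | cons s S ih =>
    intro L
    cases L with
    | nil => simp
    | cons r R =>
      by_cases h : r ≤ s
      · rw [swapPair_le _ _ h]; exact (ih R).cons₂ r
      · rw [swapPair_gt _ _ h]; exact (ih (r :: R)).cons s

/-- A3 -/
lemma len_sum : ∀ (S L : List ℕ),
    (swapPair L S).1.length + (swapPair L S).2.length = L.length + S.length := by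
  intro S
  induction S with
  | nil => intro L; simp
  | cons s S ih =>
    intro L
    cases L with
    | nil => simp
    | cons r R =>
      by_cases h : r ≤ s
      · rw [swapPair_le _ _ h]; have := ih R; simp at *; omega
      · rw [swapPair_gt _ _ h]; have := ih (r :: R); simp at *; omega

/-- A4 -/
lemma mem_fst : ∀ (S L : List ℕ) (x : ℕ), x ∈ (swapPair L S).1 → x ∈ L ∨ x ∈ S := by
  intro S
  induction S with
  | nil => intro L x hx; simp at hx; exact Or.inl hx
  | cons s S ih =>
    intro L x
    cases L with
    | nil => intro hx; exact Or.inr hx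
    | cons r R =>
      by_cases h : r ≤ s
      · rw [swapPair_le _ _ h]
        intro hx
        rcases List.mem_cons.mp hx with rfl | hx
        · exact Or.inl (List.mem_cons_self)
        · rcases ih R x hx with h' | h'
          · exact Or.inl (List.mem_cons_of_mem _ h')
          · exact Or.inr (List.mem_cons_of_mem _ h')
      · rw [swapPair_gt _ _ h]
        intro hx
        rcases List.mem_cons.mp hx with rfl | hx
        · exact Or.inr (List.mem_cons_self)
        · rcases ih (r :: R) x hx with h' | h'
          · exact Or.inl h'
          · exact Or.inr (List.mem_cons_of_mem _ h')

/-- A5: feasibility -/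
lemma feas : ∀ (S L X : List ℕ), X.Sublist S → List.Forall₂ (· ≤ ·) L X →
    (swapPair L S).2.length = L.length := by
  intro S
  induction S with
  | nil =>
    intro L X hX hd
    have : X = [] := List.sublist_nil.mp hX
    subst this
    have : L = [] := List.forall₂_nil_right_iff.mp hd
    subst this; simp
  | cons s S ih =>
    intro L X hX hd
    cases L with
    | nil => simp
    | cons r R =>
      rcases hd with _ | ⟨hrx, hd'⟩
      rename_i x X'
      by_cases h : r ≤ s
      · rw [swapPair_le _ _ h]
        simp only [List.length_cons, Nat.add_right_cancel_iff]
        rcases List.cons_sublist_cons'.mp hX with hX' | ⟨rfl, hX'⟩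
        · exact ih R X' ((List.sublist_cons_self x X').trans hX') hd'
        · exact ih R X' hX' hd'
      · rw [swapPair_gt _ _ h]
        rcases List.cons_sublist_cons'.mp hX with hX' | ⟨rfl, hX'⟩
        · exact ih (r :: R) (x :: X') hX' (List.Forall₂.cons hrx hd')
        · omega

/-- B1 -/
lemma dom_snd : ∀ (S L : List ℕ), (swapPair L S).2.length = L.length →
    List.Forall₂ (· ≤ ·) L (swapPair L S).2 := by
  intro S
  induction S with
  | nil =>
    intro L hf
    simp at hf
    have : L = [] := List.length_eq_zero_iff.mp hf.symm
    subst this; simp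
  | cons s S ih =>
    intro L hf
    cases L with
    | nil => simp
    | cons r R =>
      by_cases h : r ≤ s
      · rw [swapPair_le _ _ h] at hf ⊢
        simp only [List.length_cons, Nat.add_right_cancel_iff] at hf
        exact List.Forall₂.cons h (ih R hf)
      · rw [swapPair_gt _ _ h] at hf ⊢
        exact ih (r :: R) hf

/-- B2: minimality of the second output -/
lemma snd_min : ∀ (S L X : List ℕ), List.Pairwise (· < ·) S → X.Sublist S →
    List.Forall₂ (· ≤ ·) L X → List.Forall₂ (· ≤ ·) (swapPair L S).2 X := by
  intro S
  induction S with
  | nil =>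
    intro L X _ hX hd
    have : X = [] := List.sublist_nil.mp hX
    subst this
    have : L = [] := List.forall₂_nil_right_iff.mp hd
    subst this; simp
  | cons s S ih =>
    intro L X hP hX hd
    cases L with
    | nil =>
      have : X = [] := List.forall₂_nil_left_iff.mp hd
      subst this; simp
    | cons r R =>
      rcases hd with _ | ⟨hrx, hd'⟩
      rename_i x X'
      rcases List.pairwise_cons.mp hP with ⟨hs, hP'⟩
      by_cases h : r ≤ s
      · rw [swapPair_le _ _ h]
        rcases List.cons_sublist_cons'.mp hX with hX' | ⟨rfl, hX'⟩
        · refine List.Forall₂.cons ?_ (ih R X' hP' ((List.sublist_cons_self x X').trans hX') hd')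
          exact le_of_lt (hs x (hX'.subset (List.mem_cons_self)))
        · exact List.Forall₂.cons le_rfl (ih R X' hP' hX' hd')
      · rw [swapPair_gt _ _ h]
        rcases List.cons_sublist_cons'.mp hX with hX' | ⟨rfl, hX'⟩
        · exact ih (r :: R) (x :: X') hP' hX' (List.Forall₂.cons hrx hd')
        · omega

/-- B3a: the first output is strictly increasing -/
lemma pairwise_fst : ∀ (S L : List ℕ), List.Pairwise (· < ·) L → List.Pairwise (· < ·) S →
    List.Pairwise (· < ·) (swapPair L S).1 := by
  intro S
  induction S with
  | nil => intro L hL _; simpa using hL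
  | cons s S ih =>
    intro L hL hS
    rcases List.pairwise_cons.mp hS with ⟨hs, hS'⟩
    cases L with
    | nil => simpa using hS
    | cons r R =>
      rcases List.pairwise_cons.mp hL with ⟨hr, hL'⟩
      by_cases h : r ≤ s
      · rw [swapPair_le _ _ h]
        refine List.pairwise_cons.mpr ⟨?_, ih R hL' hS'⟩
        intro y hy
        rcases mem_fst S R y hy with h' | h'
        · exact hr y h'
        · exact lt_of_le_of_lt h (hs y h')
      · rw [swapPair_gt _ _ h]
        refine List.pairwise_cons.mpr ⟨?_, ih (r :: R) hL hS'⟩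
        intro y hy
        rcases mem_fst S (r :: R) y hy with h' | h'
        · rcases List.mem_cons.mp h' with rfl | h''
          · omega
          · have := hr y h''; omega
        · exact hs y h'

/-- B3b -/
lemma fst_le : ∀ (S L : List ℕ), (swapPair L S).2.length = L.length →
    List.Forall₂ (· ≤ ·) (swapPair L S).1 S := by
  intro S
  induction S with
  | nil =>
    intro L hf
    simp at hf
    have : L = [] := List.length_eq_zero_iff.mp hf.symm
    subst this; simp
  | cons s S ih =>
    intro L hf
    cases L with
    | nil =>
      simp only [swapPair_nil_left]
      exact List.forall₂_same.mpr (fun x _ => le_rfl)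
    | cons r R =>
      by_cases h : r ≤ s
      · rw [swapPair_le _ _ h] at hf ⊢
        simp only [List.length_cons, Nat.add_right_cancel_iff] at hf
        exact List.Forall₂.cons h (ih R hf)
      · rw [swapPair_gt _ _ h] at hf ⊢
        exact List.Forall₂.cons le_rfl (ih (r :: R) hf)

/-- B4: maximality of the first output -/
lemma fst_max : ∀ (S L Y : List ℕ), List.Pairwise (· < ·) Y → L.Sublist Y →
    List.Forall₂ (· ≤ ·) Y S → List.Forall₂ (· ≤ ·) Y (swapPair L S).1 := by
  intro S
  induction S with
  | nil =>
    intro L Y _ hLY hYS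
    have : Y = [] := List.forall₂_nil_right_iff.mp hYS
    subst this
    have : L = [] := List.sublist_nil.mp hLY
    subst this; simp
  | cons s S ih =>
    intro L Y hPY hLY hYS
    cases L with
    | nil => simpa using hYS
    | cons r R =>
      rcases hYS with _ | ⟨hys, hYS'⟩
      rename_i y Y'
      rcases List.pairwise_cons.mp hPY with ⟨hy, hPY'⟩
      by_cases h : r ≤ s
      · rw [swapPair_le _ _ h]
        rcases List.cons_sublist_cons'.mp hLY with hLY' | ⟨rfl, hLY'⟩
        · refine List.Forall₂.cons ?_ (ih R Y' hPY' ((List.sublist_cons_self r R).trans hLY') hYS')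
          exact le_of_lt (hy r (hLY'.subset (List.mem_cons_self)))
        · exact List.Forall₂.cons le_rfl (ih R Y' hPY' hLY' hYS')
      · rw [swapPair_gt _ _ h]
        rcases List.cons_sublist_cons'.mp hLY with hLY' | ⟨rfl, hLY'⟩
        · exact List.Forall₂.cons hys (ih (r :: R) Y' hPY' hLY' hYS')
        · omega

/-- helper for P5 -/
lemma shift_le : ∀ (A Y : List ℕ), List.Pairwise (· < ·) Y → List.Forall₂ (· ≤ ·) A Y →
    List.Forall₂ (· ≤ ·) A.dropLast Y.tail := by
  intro A
  induction A with
  | nil =>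
    intro Y _ hd
    have : Y = [] := List.forall₂_nil_left_iff.mp hd
    subst this; simp
  | cons a A ih =>
    intro Y hP hd
    rcases hd with _ | ⟨hay, hd'⟩
    rename_i y Y'
    cases A with
    | nil =>
      have : Y' = [] := List.forall₂_nil_left_iff.mp hd'
      subst this; simp
    | cons b A' =>
      rcases hd' with _ | ⟨hby', hd''⟩
      rename_i y' Y''
      rcases List.pairwise_cons.mp hP with ⟨hy, hP'⟩
      have h1 : a ≤ y' := le_of_lt (lt_of_le_of_lt hay (hy y' (List.mem_cons_self)))
      have h2 := ih (y' :: Y'') hP' (List.Forall₂.cons hby' hd'')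
      simp only [List.dropLast_cons₂, List.tail_cons] at h2 ⊢
      exact List.Forall₂.cons h1 h2

/-- P5 -/
lemma take_fst_le_snd : ∀ (S L : List ℕ), List.Pairwise (· < ·) S →
    (swapPair L S).2.length = L.length →
    List.Forall₂ (· ≤ ·) ((swapPair L S).1.take L.length) (swapPair L S).2 := by
  intro S
  induction S with
  | nil =>
    intro L hP hf
    simp at hf
    have : L = [] := List.length_eq_zero_iff.mp hf.symm
    subst this; simp
  | cons s S ih =>
    intro L hP hf
    rcases List.pairwise_cons.mp hP with ⟨hs, hP'⟩
    cases L with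
    | nil => simp
    | cons r R =>
      by_cases h : r ≤ s
      · rw [swapPair_le _ _ h] at hf ⊢
        simp only [List.length_cons, Nat.add_right_cancel_iff] at hf
        simp only [List.length_cons, List.take_succ_cons]
        exact List.Forall₂.cons h (ih R hP' hf)
      · rw [swapPair_gt _ _ h] at hf ⊢
        have h1 := ih (r :: R) hP' hf
        obtain ⟨w, sn', hw1⟩ := List.exists_cons_of_ne_nil
          (show (swapPair (r :: R) S).2 ≠ [] by
            intro hnil; rw [hnil] at hf; simp at hf)
        have hrw : r ≤ w := by
          have hdom := dom_snd S (r :: R) hf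
          rw [hw1] at hdom
          rcases hdom with _ | ⟨hrw, _⟩
          exact hrw
        simp only [List.length_cons, List.take_succ_cons]
        rw [hw1]
        refine List.Forall₂.cons (by omega) ?_
        have hP2 : List.Pairwise (· < ·) ((swapPair (r :: R) S).2) :=
          hP'.sublist (snd_sublist S (r :: R))
        have h2 := shift_le _ _ hP2 h1
        have hlen1 : R.length + 1 ≤ (swapPair (r :: R) S).1.length := by
          have h3 := len_sum S (r :: R)
          have h4 := List.Sublist.length_le (snd_sublist S (r :: R))
          simp only [List.length_cons] at h3 hf
          omega
        have hdl : ((swapPair (r :: R) S).1.take (R.length + 1)).dropLast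
            = (swapPair (r :: R) S).1.take R.length := by
          rw [List.dropLast_eq_take, List.length_take, List.take_take]
          congr 1
          omega
        simp only [List.length_cons] at h2
        rw [hdl, hw1] at h2
        simpa using h2

/-! ### The reversal/negation involution -/

def iota (c : ℕ) (X : List ℕ) : List ℕ := (X.map (c - ·)).reverse

@[simp] lemma iota_nil (c : ℕ) : iota c [] = [] := rfl

lemma iota_cons (c x : ℕ) (X : List ℕ) : iota c (x :: X) = iota c X ++ [c - x] := by
  simp [iota]

@[simp] lemma iota_length (c : ℕ) (X : List ℕ) : (iota c X).length = X.length := by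
  simp [iota]

lemma mem_iota {c x : ℕ} {X : List ℕ} : x ∈ iota c X ↔ ∃ y ∈ X, c - y = x := by
  simp [iota]

lemma iota_le (c x : ℕ) {X : List ℕ} (h : x ∈ iota c X) : x ≤ c := by
  rcases mem_iota.mp h with ⟨y, _, rfl⟩
  exact Nat.sub_le _ _

lemma iota_iota {c : ℕ} {X : List ℕ} (h : ∀ x ∈ X, x ≤ c) : iota c (iota c X) = X := by
  simp only [iota, List.map_reverse, List.reverse_reverse, List.map_map]
  rw [List.map_congr_left (g := id), List.map_id]
  intro x hx
  simp [Nat.sub_sub_self (h x hx)]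

lemma iota_forall₂ {c : ℕ} {X Y : List ℕ} (h : List.Forall₂ (· ≤ ·) X Y) :
    List.Forall₂ (· ≤ ·) (iota c Y) (iota c X) := by
  induction h with
  | nil => simp
  | cons hab h ih =>
    rename_i a b X' Y'
    rw [iota_cons, iota_cons]
    have : c - b ≤ c - a := Nat.sub_le_sub_left hab c
    exact List.rel_append ih (List.Forall₂.cons this List.Forall₂.nil)

lemma iota_sublist {c : ℕ} {X Y : List ℕ} (h : X.Sublist Y) :
    (iota c X).Sublist (iota c Y) := (h.map _).reverse

lemma iota_pairwise {c : ℕ} {Y : List ℕ} (hP : List.Pairwise (· < ·) Y)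
    (hb : ∀ y ∈ Y, y ≤ c) : List.Pairwise (· < ·) (iota c Y) := by
  rw [iota, List.pairwise_reverse, List.pairwise_map]
  refine hP.imp_of_mem ?_
  intro a b ha hb'
  have h1 := hb a ha
  have h2 := hb b hb'
  intro hlt
  omega

lemma iota_take (c n : ℕ) (X : List ℕ) :
    iota c (X.take n) = (iota c X).drop (X.length - n) := by
  simp only [iota, List.map_take, List.reverse_take, List.length_map]

/-- append lemma 1 -/
lemma swapPair_append : ∀ (Q P : List ℕ) (a b : ℕ), a ≤ b →
    (∀ x ∈ (swapPair P Q).1, x < a) →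
    swapPair (P ++ [a]) (Q ++ [b]) = ((swapPair P Q).1 ++ [a], (swapPair P Q).2 ++ [b]) := by
  intro Q
  induction Q with
  | nil =>
    intro P a b hab hx
    cases P with
    | nil =>
      simp only [swapPair_nil_right, List.nil_append]
      rw [swapPair_le _ _ hab]
      simp
    | cons p P' =>
      simp only [swapPair_nil_right] at hx
      have hpa : p < a := hx p (List.mem_cons_self)
      simp only [List.nil_append, List.cons_append]
      rw [swapPair_le _ _ (by omega : p ≤ b)]
      simp
  | cons q Q' ih =>
    intro P a b hab hx
    cases P with
    | nil =>
      simp only [swapPair_nil_left] at hx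
      have hqa : q < a := hx q (List.mem_cons_self)
      simp only [List.nil_append, List.cons_append]
      rw [swapPair_gt _ _ (by omega : ¬ a ≤ q)]
      have := ih [] a b hab (by
        simp only [swapPair_nil_left]
        intro x hxx
        exact hx x (List.mem_cons_of_mem _ hxx))
      simp only [List.nil_append] at this
      rw [this]
      simp
    | cons p P' =>
      by_cases h : p ≤ q
      · rw [swapPair_le _ _ h] at hx
        simp only [List.cons_append]
        rw [swapPair_le _ _ h, swapPair_le _ _ h]
        have := ih P' a b hab (fun x hxx => hx x (List.mem_cons_of_mem _ hxx))
        rw [this]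
        simp
      · rw [swapPair_gt _ _ h] at hx
        simp only [List.cons_append]
        rw [swapPair_gt _ _ h, swapPair_gt _ _ h]
        have := ih (p :: P') a b hab (fun x hxx => hx x (List.mem_cons_of_mem _ hxx))
        simp only [List.cons_append] at this
        rw [this]
        simp

/-- append lemma 2 -/
lemma swapPair_append_right : ∀ (Q P : List ℕ) (v : ℕ),
    (swapPair P Q).2.length = P.length →
    swapPair P (Q ++ [v]) = ((swapPair P Q).1 ++ [v], (swapPair P Q).2) := by
  intro Q
  induction Q with
  | nil =>
    intro P v hf
    cases P with
    | nil => simp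
    | cons p P' => simp at hf
  | cons q Q' ih =>
    intro P v hf
    cases P with
    | nil => simp
    | cons p P' =>
      by_cases h : p ≤ q
      · rw [swapPair_le _ _ h] at hf
        simp only [List.length_cons, Nat.add_right_cancel_iff] at hf
        simp only [List.cons_append]
        rw [swapPair_le _ _ h, swapPair_le _ _ h]
        rw [ih P' v hf]
        simp
      · rw [swapPair_gt _ _ h] at hf
        simp only [List.cons_append]
        rw [swapPair_gt _ _ h, swapPair_gt _ _ h]
        rw [ih (p :: P') v hf]
        simp

/-- The key involution identity. -/
lemma swapPair_inv (c : ℕ) : ∀ (S L : List ℕ), List.Pairwise (· < ·) L →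
    List.Pairwise (· < ·) S → (∀ x ∈ L, x ≤ c) → (∀ x ∈ S, x ≤ c) →
    (swapPair L S).2.length = L.length →
    swapPair (iota c (swapPair L S).2) (iota c (swapPair L S).1) = (iota c S, iota c L) := by
  intro S
  induction S with
  | nil =>
    intro L _ _ _ _ hf
    simp only [swapPair_nil_right] at hf ⊢
    have : L = [] := List.length_eq_zero_iff.mp hf.symm
    subst this; simp
  | cons s S ih =>
    intro L hL hS hbL hbS hf
    rcases List.pairwise_cons.mp hS with ⟨hs, hS'⟩
    cases L with
    | nil => simp
    | cons r R =>
      rcases List.pairwise_cons.mp hL with ⟨hr, hL'⟩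
      by_cases h : r ≤ s
      · rw [swapPair_le _ _ h] at hf ⊢
        simp only [List.length_cons, Nat.add_right_cancel_iff] at hf
        have ihh := ih R hL' hS' (fun x hx => hbL x (List.mem_cons_of_mem _ hx))
          (fun x hx => hbS x (List.mem_cons_of_mem _ hx)) hf
        simp only [iota_cons]
        rw [swapPair_append (iota c (swapPair R S).1) (iota c (swapPair R S).2) (c - s) (c - r)
          (Nat.sub_le_sub_left h c) ?hbnd]
        · rw [ihh]
        case hbnd =>
          intro x hx
          rw [ihh] at hx
          rcases mem_iota.mp hx with ⟨y, hy, rfl⟩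
          have h1 := hs y hy
          have h2 := hbS y (List.mem_cons_of_mem _ hy)
          have h3 := hbS s (List.mem_cons_self)
          omega
      · rw [swapPair_gt _ _ h] at hf ⊢
        have ihh := ih (r :: R) hL hS' hbL (fun x hx => hbS x (List.mem_cons_of_mem _ hx)) hf
        simp only [iota_cons]
        rw [swapPair_append_right (iota c (swapPair (r :: R) S).1) (iota c (swapPair (r :: R) S).2)
          (c - s) ?hlen]
        · rw [ihh]
          simp [iota_cons]
        case hlen =>
          rw [ihh]
          simp [hf]

/-! ### Derived universal properties -/

lemma P6 (c : ℕ) (L S : List ℕ) (hL : List.Pairwise (· < ·) L) (hS : List.Pairwise (· < ·) S)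
    (hbL : ∀ x ∈ L, x ≤ c) (hbS : ∀ x ∈ S, x ≤ c)
    (hf : (swapPair L S).2.length = L.length)
    (X : List ℕ) (hX : X.Sublist (swapPair L S).1)
    (hd : List.Forall₂ (· ≤ ·) X (swapPair L S).2) : List.Forall₂ (· ≤ ·) X L := by
  have hinv := swapPair_inv c S L hL hS hbL hbS hf
  have hbrn : ∀ x ∈ (swapPair L S).1, x ≤ c :=
    fun x hx => (mem_fst S L x hx).elim (hbL x) (hbS x)
  have hbX : ∀ x ∈ X, x ≤ c := fun x hx => hbrn x (hX.subset hx)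
  have h1 : (iota c X).Sublist (iota c (swapPair L S).1) := iota_sublist hX
  have h2 : List.Forall₂ (· ≤ ·) (iota c (swapPair L S).2) (iota c X) := iota_forall₂ hd
  have h3 := snd_min (iota c (swapPair L S).1) (iota c (swapPair L S).2) (iota c X)
      (iota_pairwise (pairwise_fst S L hL hS) hbrn) h1 h2
  rw [hinv] at h3
  have h4 := iota_forall₂ (c := c) h3
  rwa [iota_iota hbX, iota_iota hbL] at h4

lemma P7 (c : ℕ) (L S : List ℕ) (hL : List.Pairwise (· < ·) L) (hS : List.Pairwise (· < ·) S)
    (hbL : ∀ x ∈ L, x ≤ c) (hbS : ∀ x ∈ S, x ≤ c)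
    (hf : (swapPair L S).2.length = L.length)
    (Y : List ℕ) (hY : (swapPair L S).2.Sublist Y) (hPY : List.Pairwise (· < ·) Y)
    (hbY : ∀ y ∈ Y, y ≤ c)
    (hd : List.Forall₂ (· ≤ ·) (swapPair L S).1 Y) : List.Forall₂ (· ≤ ·) S Y := by
  have hinv := swapPair_inv c S L hL hS hbL hbS hf
  have h1 : (iota c (swapPair L S).2).Sublist (iota c Y) := iota_sublist hY
  have h2 : List.Forall₂ (· ≤ ·) (iota c Y) (iota c (swapPair L S).1) := iota_forall₂ hd
  have h3 := fst_max (iota c (swapPair L S).1) (iota c (swapPair L S).2) (iota c Y)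
      (iota_pairwise hPY hbY) h1 h2
  rw [hinv] at h3
  have h4 := iota_forall₂ (c := c) h3
  rwa [iota_iota hbS, iota_iota hbY] at h4

/-! ### Bridges between `rowRel` and `Forall₂` -/

lemma forall₂_iff_getD : ∀ (X Y : List ℕ), X.length = Y.length →
    ((∀ t, t < Y.length → X.getD t 0 ≤ Y.getD t 0) ↔ List.Forall₂ (· ≤ ·) X Y) := by
  intro X
  induction X with
  | nil =>
    intro Y h
    have : Y = [] := List.length_eq_zero_iff.mp h.symm
    subst this; simp
  | cons x X ih =>
    intro Y h
    cases Y with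
    | nil => simp at h
    | cons y Y' =>
      simp only [List.length_cons] at h
      constructor
      · intro H
        refine List.Forall₂.cons ?_ ((ih Y' (by omega)).mp ?_)
        · have := H 0 (by simp); simpa using this
        · intro t ht
          have := H (t + 1) (by simp; omega)
          simpa using this
      · intro H t ht
        rcases H with _ | ⟨h1, h2⟩
        cases t with
        | zero => simpa using h1
        | succ t =>
          simp only [List.getD_cons_succ]
          exact (ih Y' (by omega)).mpr h2 t (by simp at ht; omega)

lemma rowRel_iff_eq {X Y : List ℕ} (h : X.length = Y.length) :
    rowRel X Y ↔ List.Forall₂ (· ≤ ·) X Y := by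
  rw [rowRel, if_pos (le_of_eq h.symm)]
  exact forall₂_iff_getD X Y h

lemma rowRel_iff_le {X Y : List ℕ} (h : X.length ≤ Y.length) :
    rowRel X Y ↔ List.Forall₂ (· ≤ ·) X (Y.drop (Y.length - X.length)) := by
  rcases Nat.eq_or_lt_of_le h with he | hlt
  · rw [show Y.length - X.length = 0 by omega, List.drop_zero]
    exact rowRel_iff_eq he
  · rw [rowRel, if_neg (by omega)]
    have hg : ∀ t, t < X.length →
        (Y.drop (Y.length - X.length)).getD t 0 = Y.getD (Y.length - X.length + t) 0 := by
      intro t ht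
      rw [List.getD_eq_getElem?_getD, List.getD_eq_getElem?_getD, List.getElem?_drop]
    have base := forall₂_iff_getD X (Y.drop (Y.length - X.length))
      (by rw [List.length_drop]; omega)
    constructor
    · intro H
      refine base.mp ?_
      intro t ht
      have ht' : t < X.length := by rw [List.length_drop] at ht; omega
      rw [hg t ht']
      exact H t ht'
    · intro H t ht
      have H2 := base.mpr H t (by rw [List.length_drop]; omega)
      rwa [hg t ht] at H2

lemma rowRel_iff_ge {X Y : List ℕ} (h : Y.length ≤ X.length) :
    rowRel X Y ↔ List.Forall₂ (· ≤ ·) (X.take Y.length) Y := by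
  rw [rowRel, if_pos h]
  have hg : ∀ t, t < Y.length → (X.take Y.length).getD t 0 = X.getD t 0 := by
    intro t ht
    rw [List.getD_eq_getElem?_getD, List.getD_eq_getElem?_getD, List.getElem?_take_of_lt ht]
  have base := forall₂_iff_getD (X.take Y.length) Y (by rw [List.length_take]; omega)
  constructor
  · intro H
    refine base.mp ?_
    intro t ht
    rw [hg t ht]
    exact H t ht
  · intro H t ht
    have H2 := base.mpr H t ht
    rwa [hg t ht] at H2

lemma forall₂_antisymm : ∀ (X Y : List ℕ), List.Forall₂ (· ≤ ·) X Y →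
    List.Forall₂ (· ≤ ·) Y X → X = Y := by
  intro X
  induction X with
  | nil =>
    intro Y h1 _
    have := List.forall₂_nil_left_iff.mp h1
    rw [this]
  | cons a X ih =>
    intro Y h1 h2
    rcases h1 with _ | ⟨hab, h1'⟩
    rename_i b Y'
    rcases h2 with _ | ⟨hba, h2'⟩
    rw [ih Y' h1' h2', Nat.le_antisymm hab hba]

/-! ### Uniqueness of the swap spec -/

lemma spec_unique {ℓ : ℕ} {A B X Y X' Y' : List ℕ}
    (h1 : SwapSpec ℓ A B X Y) (h2 : SwapSpec ℓ A B X' Y') : X = X' ∧ Y = Y' := by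
  by_cases hc : A.length ≤ B.length
  · rw [SwapSpec, if_pos hc] at h1 h2
    obtain ⟨⟨a1, a2, a3, a4⟩, ⟨b1, b2, b3, b4, b5⟩⟩ := h1
    obtain ⟨⟨c1, c2, c3, c4⟩, ⟨d1, d2, d3, d4, d5⟩⟩ := h2
    constructor
    · have e1 : rowRel X X' := d5 X b1 b2 b3 b4
      have e2 : rowRel X' X := b5 X' d1 d2 d3 d4
      exact forall₂_antisymm X X' ((rowRel_iff_eq (by omega)).mp e1)
        ((rowRel_iff_eq (by omega)).mp e2)
    · have e1 : rowRel Y Y' := a4 Y' c1 c2 c3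
      have e2 : rowRel Y' Y := c4 Y a1 a2 a3
      exact forall₂_antisymm Y Y' ((rowRel_iff_eq (by omega)).mp e1)
        ((rowRel_iff_eq (by omega)).mp e2)
  · rw [SwapSpec, if_neg hc] at h1 h2
    obtain ⟨⟨a1, a2, a3, a4⟩, ⟨b1, b2, b3, b4, b5⟩⟩ := h1
    obtain ⟨⟨c1, c2, c3, c4⟩, ⟨d1, d2, d3, d4, d5⟩⟩ := h2
    constructor
    · have e1 : rowRel X X' := c4 X a1 a2 a3
      have e2 : rowRel X' X := a4 X' c1 c2 c3
      exact forall₂_antisymm X X' ((rowRel_iff_eq (by omega)).mp e1)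
        ((rowRel_iff_eq (by omega)).mp e2)
    · have e1 : rowRel Y Y' := b5 Y' d1 d2 d3 d4
      have e2 : rowRel Y' Y := d5 Y b1 b2 b3 b4
      exact forall₂_antisymm Y Y' ((rowRel_iff_eq (by omega)).mp e1)
        ((rowRel_iff_eq (by omega)).mp e2)

/-! ### The key involution theorem -/

theorem key (ℓ : ℕ) (R S Rn Sn : List ℕ) (hR : IsRow ℓ R) (hS : IsRow ℓ S)
    (hrel : rowRel R S) (hspec : SwapSpec ℓ R S Rn Sn) (hne : R.length ≠ S.length) :
    IsRow ℓ Rn ∧ IsRow ℓ Sn ∧ rowRel Rn Sn ∧ SwapSpec ℓ Rn Sn R S := by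
  set c := ℓ + 2 with hc
  have hPR : List.Pairwise (· < ·) R := List.isChain_iff_pairwise.mp hR.1
  have hPS : List.Pairwise (· < ·) S := List.isChain_iff_pairwise.mp hS.1
  have hbR : ∀ x ∈ R, x ≤ c := fun x hx => by have := hR.2 x hx; omega
  have hbS : ∀ x ∈ S, x ≤ c := fun x hx => by have := hS.2 x hx; omega
  rcases Nat.lt_or_ge R.length S.length with hlt | hge
  · -- case `R.length < S.length`
    have hfeas : (swapPair R S).2.length = R.length := by
      apply feas S R (S.drop (S.length - R.length)) (List.drop_sublist _ _)
      exact (rowRel_iff_le (le_of_lt hlt)).mp hrel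
    have hsnS : (swapPair R S).2.Sublist S := snd_sublist S R
    have hRrn : R.Sublist (swapPair R S).1 := sublist_fst S R
    have hlsn : (swapPair R S).2.length = R.length := hfeas
    have hlrn : (swapPair R S).1.length = S.length := by have := len_sum S R; omega
    have hPrn : List.Pairwise (· < ·) (swapPair R S).1 := pairwise_fst S R hPR hPS
    have hPsn : List.Pairwise (· < ·) (swapPair R S).2 := hPS.sublist hsnS
    have hRowrn : IsRow ℓ (swapPair R S).1 :=
      ⟨List.isChain_iff_pairwise.mpr hPrn,
        fun x hx => (mem_fst S R x hx).elim (hR.2 x) (hS.2 x)⟩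
    have hRowsn : IsRow ℓ (swapPair R S).2 :=
      ⟨List.isChain_iff_pairwise.mpr hPsn, fun x hx => hS.2 x (hsnS.subset hx)⟩
    have hrelrnsn : rowRel (swapPair R S).1 (swapPair R S).2 := by
      rw [rowRel_iff_ge (by omega)]
      have h5 := take_fst_le_snd S R hPS hfeas
      rw [hlsn]
      exact h5
    rw [SwapSpec, if_pos (le_of_lt hlt)] at hspec
    obtain ⟨⟨hSn1, hSn2, hSn3, hSn4⟩, ⟨hRn1, hRn2, hRn3, hRn4, hRn5⟩⟩ := hspec
    have hSneq : Sn = (swapPair R S).2 := by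
      have e1 : rowRel Sn (swapPair R S).2 :=
        hSn4 _ hsnS hlsn ((rowRel_iff_eq (by omega)).mpr (dom_snd S R hfeas))
      have e2 : List.Forall₂ (· ≤ ·) (swapPair R S).2 Sn :=
        snd_min S R Sn hPS hSn1 ((rowRel_iff_eq (by omega)).mp hSn3)
      exact forall₂_antisymm _ _ ((rowRel_iff_eq (by omega)).mp e1) e2
    have hRneq : Rn = (swapPair R S).1 := by
      have e1 : rowRel (swapPair R S).1 Rn :=
        hRn5 _ hRrn hlrn hRowrn ((rowRel_iff_eq (by omega)).mpr (fst_le S R hfeas))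
      have e2 : List.Forall₂ (· ≤ ·) Rn (swapPair R S).1 :=
        fst_max S R Rn (List.isChain_iff_pairwise.mp hRn3.1) hRn1
          ((rowRel_iff_eq (by omega)).mp hRn4)
      exact forall₂_antisymm _ _ e2 ((rowRel_iff_eq (by omega)).mp e1)
    subst hSneq hRneq
    refine ⟨hRowrn, hRowsn, hrelrnsn, ?_⟩
    rw [SwapSpec, if_neg (by omega : ¬ (swapPair R S).1.length ≤ (swapPair R S).2.length)]
    refine ⟨⟨hRrn, by omega, (rowRel_iff_eq (by omega)).mpr (dom_snd S R hfeas), ?_⟩,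
            ⟨hsnS, by omega, hS, (rowRel_iff_eq (by omega)).mpr (fst_le S R hfeas), ?_⟩⟩
    · intro R' hR'sub hR'len hR'rel
      rw [rowRel_iff_eq (by omega)] at hR'rel
      rw [rowRel_iff_eq (by omega)]
      exact P6 c R S hPR hPS hbR hbS hfeas R' hR'sub hR'rel
    · intro S' hS'sub hS'len hS'row hS'rel
      rw [rowRel_iff_eq (by omega)] at hS'rel
      rw [rowRel_iff_eq (by omega)]
      exact P7 c R S hPR hPS hbR hbS hfeas S' hS'sub
        (List.isChain_iff_pairwise.mp hS'row.1)
        (fun y hy => by have := hS'row.2 y hy; omega) hS'rel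
  · -- case `S.length < R.length`
    have hgt : S.length < R.length := by omega
    obtain ⟨L0, hL0⟩ : ∃ L0, L0 = iota c S := ⟨_, rfl⟩
    obtain ⟨S0, hS0⟩ : ∃ S0, S0 = iota c R := ⟨_, rfl⟩
    have hbL0 : ∀ x ∈ L0, x ≤ c := by rw [hL0]; exact fun x hx => iota_le c x hx
    have hbS0 : ∀ x ∈ S0, x ≤ c := by rw [hS0]; exact fun x hx => iota_le c x hx
    have hPL0 : List.Pairwise (· < ·) L0 := by rw [hL0]; exact iota_pairwise hPS hbS
    have hPS0 : List.Pairwise (· < ·) S0 := by rw [hS0]; exact iota_pairwise hPR hbR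
    have hlL0 : L0.length = S.length := by rw [hL0, iota_length]
    have hlS0 : S0.length = R.length := by rw [hS0, iota_length]
    have hiL0 : iota c L0 = S := by rw [hL0, iota_iota hbS]
    have hiS0 : iota c S0 = R := by rw [hS0, iota_iota hbR]
    have hfeas0 : (swapPair L0 S0).2.length = L0.length := by
      apply feas S0 L0 (iota c (R.take S.length))
      · rw [hS0]; exact iota_sublist (List.take_sublist _ _)
      · rw [hL0]; exact iota_forall₂ ((rowRel_iff_ge (le_of_lt hgt)).mp hrel)
    have hinv : swapPair (iota c (swapPair L0 S0).2) (iota c (swapPair L0 S0).1)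
        = (R, S) := by
      rw [swapPair_inv c S0 L0 hPL0 hPS0 hbL0 hbS0 hfeas0, hiS0, hiL0]
    have hlsn0 : (swapPair L0 S0).2.length = S.length := by rw [hfeas0, hlL0]
    have hlrn0 : (swapPair L0 S0).1.length = R.length := by
      have h1 := len_sum S0 L0
      omega
    have hbrn0 : ∀ x ∈ (swapPair L0 S0).1, x ≤ c :=
      fun x hx => (mem_fst S0 L0 x hx).elim (hbL0 x) (hbS0 x)
    have hbsn0 : ∀ x ∈ (swapPair L0 S0).2, x ≤ c :=
      fun x hx => hbS0 x ((snd_sublist S0 L0).subset hx)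
    have hPrn0 : List.Pairwise (· < ·) (swapPair L0 S0).1 := pairwise_fst S0 L0 hPL0 hPS0
    have hPsn0 : List.Pairwise (· < ·) (swapPair L0 S0).2 :=
      hPS0.sublist (snd_sublist S0 L0)
    -- candidates
    have hRnsub : (iota c (swapPair L0 S0).2).Sublist R := by
      have h1 := iota_sublist (c := c) (snd_sublist S0 L0)
      rwa [hiS0] at h1
    have hSnsup : S.Sublist (iota c (swapPair L0 S0).1) := by
      have h1 := iota_sublist (c := c) (sublist_fst S0 L0)
      rwa [hiL0] at h1
    have hrelRnS : List.Forall₂ (· ≤ ·) (iota c (swapPair L0 S0).2) S := by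
      have h1 := iota_forall₂ (c := c) (dom_snd S0 L0 hfeas0)
      rwa [hiL0] at h1
    have hrelRSn : List.Forall₂ (· ≤ ·) R (iota c (swapPair L0 S0).1) := by
      have h1 := iota_forall₂ (c := c) (fst_le S0 L0 hfeas0)
      rwa [hiS0] at h1
    have hlRncand : (iota c (swapPair L0 S0).2).length = S.length := by
      rw [iota_length, hlsn0]
    have hlSncand : (iota c (swapPair L0 S0).1).length = R.length := by
      rw [iota_length, hlrn0]
    have hRowRncand : IsRow ℓ (iota c (swapPair L0 S0).2) :=
      ⟨List.isChain_iff_pairwise.mpr (hPR.sublist hRnsub),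
        fun x hx => hR.2 x (hRnsub.subset hx)⟩
    have hRowSncand : IsRow ℓ (iota c (swapPair L0 S0).1) := by
      refine ⟨List.isChain_iff_pairwise.mpr (iota_pairwise hPrn0 hbrn0), ?_⟩
      intro x hx
      rcases mem_iota.mp hx with ⟨v, hv, rfl⟩
      rcases mem_fst S0 L0 v hv with h' | h'
      · rw [hL0] at h'
        rcases mem_iota.mp h' with ⟨u, hu, rfl⟩
        have := hS.2 u hu
        omega
      · rw [hS0] at h'
        rcases mem_iota.mp h' with ⟨u, hu, rfl⟩
        have := hR.2 u hu
        omega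
    rw [SwapSpec, if_neg (by omega)] at hspec
    obtain ⟨⟨hRn1, hRn2, hRn3, hRn4⟩, ⟨hSn1, hSn2, hSn3, hSn4, hSn5⟩⟩ := hspec
    have hbRn : ∀ x ∈ Rn, x ≤ c := fun x hx => hbR x (hRn1.subset hx)
    have hbSn : ∀ x ∈ Sn, x ≤ c := fun x hx => by have := hSn3.2 x hx; omega
    have hRneq : Rn = iota c (swapPair L0 S0).2 := by
      have e1 : rowRel (iota c (swapPair L0 S0).2) Rn :=
        hRn4 _ hRnsub (by omega)
          ((rowRel_iff_eq (by omega)).mpr hrelRnS)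
      have e2 : List.Forall₂ (· ≤ ·) Rn (iota c (swapPair L0 S0).2) := by
        have h1 : (iota c Rn).Sublist S0 := by rw [hS0]; exact iota_sublist hRn1
        have h2 : List.Forall₂ (· ≤ ·) L0 (iota c Rn) := by
          rw [hL0]
          exact iota_forall₂ ((rowRel_iff_eq (by omega)).mp hRn3)
        have h3 := snd_min S0 L0 (iota c Rn) hPS0 h1 h2
        have h4 := iota_forall₂ (c := c) h3
        rwa [iota_iota hbRn] at h4
      exact forall₂_antisymm _ _ e2 ((rowRel_iff_eq (by omega)).mp e1)
    have hSneq : Sn = iota c (swapPair L0 S0).1 := by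
      have e1 : rowRel Sn (iota c (swapPair L0 S0).1) :=
        hSn5 _ hSnsup (by omega) hRowSncand
          ((rowRel_iff_eq (by omega)).mpr hrelRSn)
      have e2 : List.Forall₂ (· ≤ ·) (iota c (swapPair L0 S0).1) Sn := by
        have h1 : L0.Sublist (iota c Sn) := by rw [hL0]; exact iota_sublist hSn1
        have h2 : List.Forall₂ (· ≤ ·) (iota c Sn) S0 := by
          rw [hS0]
          exact iota_forall₂ ((rowRel_iff_eq (by omega)).mp hSn4)
        have h3 := fst_max S0 L0 (iota c Sn)
          (iota_pairwise (List.isChain_iff_pairwise.mp hSn3.1) hbSn) h1 h2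
        have h4 := iota_forall₂ (c := c) h3
        rwa [iota_iota hbSn] at h4
      exact forall₂_antisymm _ _ ((rowRel_iff_eq (by omega)).mp e1) e2
    subst hRneq hSneq
    refine ⟨hRowRncand, hRowSncand, ?_, ?_⟩
    · -- rowRel Rn Sn
      rw [rowRel_iff_le (by omega)]
      have h5 := take_fst_le_snd S0 L0 hPS0 hfeas0
      have h6 := iota_forall₂ (c := c) h5
      rw [iota_take] at h6
      have harith : (swapPair L0 S0).1.length - L0.length
          = (iota c (swapPair L0 S0).1).length - (iota c (swapPair L0 S0).2).length := by
        rw [iota_length, iota_length]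
        omega
      rwa [harith] at h6
    · -- SwapSpec
      rw [SwapSpec, if_pos (by omega)]
      constructor
      · refine ⟨hSnsup, by omega,
          (rowRel_iff_eq (by omega)).mpr hrelRnS, ?_⟩
        intro S' hS'sub hS'len hS'rel
        rw [rowRel_iff_eq (by omega)] at hS'rel
        rw [rowRel_iff_eq (by omega)]
        have hbS' : ∀ x ∈ S', x ≤ c := fun x hx => iota_le c x (hS'sub.subset hx)
        have h1 : (iota c S').Sublist (swapPair L0 S0).1 := by
          have h0 := iota_sublist (c := c) hS'sub
          rwa [iota_iota hbrn0] at h0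
        have h2 : List.Forall₂ (· ≤ ·) (iota c S') (swapPair L0 S0).2 := by
          have h0 := iota_forall₂ (c := c) hS'rel
          rwa [iota_iota hbsn0] at h0
        have h3 := P6 c L0 S0 hPL0 hPS0 hbL0 hbS0 hfeas0 (iota c S') h1 h2
        have h4 := iota_forall₂ (c := c) h3
        rwa [iota_iota hbS', hiL0] at h4
      · refine ⟨hRnsub, by omega, hR,
          (rowRel_iff_eq (by omega)).mpr hrelRSn, ?_⟩
        intro R' hR'sub hR'len hR'row hR'rel
        rw [rowRel_iff_eq (by omega)] at hR'rel
        rw [rowRel_iff_eq (by omega)]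
        have hbR' : ∀ x ∈ R', x ≤ c := fun x hx => by have := hR'row.2 x hx; omega
        have h1 : (swapPair L0 S0).2.Sublist (iota c R') := by
          have h0 := iota_sublist (c := c) hR'sub
          rwa [iota_iota hbsn0] at h0
        have h2 : List.Forall₂ (· ≤ ·) (swapPair L0 S0).1 (iota c R') := by
          have h0 := iota_forall₂ (c := c) hR'rel
          rwa [iota_iota hbrn0] at h0
        have h3 := P7 c L0 S0 hPL0 hPS0 hbL0 hbS0 hfeas0 (iota c R')
          h1 (iota_pairwise (List.isChain_iff_pairwise.mp hR'row.1) hbR')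
          (fun y hy => iota_le c y hy) h2
        have h4 := iota_forall₂ (c := c) h3
        rwa [iota_iota hbR', hiS0] at h4

end SwapProof

open Rows in
/-- **(The swap maps are involutions.)**  With `φ_{k,h}(R,S) = (R⁰,S⁰)` defined
for comparable pairs `R ⟵ S` of rows (via the characterizing max/min
properties), the swap maps satisfy `φ_{k,k} = Id` and `φ_{h,k} ∘ φ_{k,h} = Id`. -/
theorem swap_involution (ℓ : ℕ)
    (φ : List ℕ → List ℕ → List ℕ × List ℕ)
    (hφ : ∀ R S, IsRow ℓ R → IsRow ℓ S → rowRel R S →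
      SwapSpec ℓ R S (φ R S).1 (φ R S).2) :
    (∀ R S, IsRow ℓ R → IsRow ℓ S → rowRel R S → R.length = S.length →
      φ R S = (R, S)) ∧
    (∀ R S, IsRow ℓ R → IsRow ℓ S → rowRel R S →
      φ (φ R S).1 (φ R S).2 = (R, S)) := by
  have part1 : ∀ R S, IsRow ℓ R → IsRow ℓ S → rowRel R S → R.length = S.length →
      φ R S = (R, S) := by
    intro R S hR hS hrel hlen
    have hspec := hφ R S hR hS hrel
    rw [SwapSpec, if_pos (le_of_eq hlen)] at hspec
    obtain ⟨⟨a1, a2, _, _⟩, ⟨b1, b2, _, _, _⟩⟩ := hspec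
    have h1 : (φ R S).2 = S := a1.eq_of_length (by omega)
    have h2 : (φ R S).1 = R := (b1.eq_of_length (by omega)).symm
    rw [Prod.ext_iff]
    exact ⟨h2, h1⟩
  refine ⟨part1, ?_⟩
  intro R S hR hS hrel
  by_cases hlen : R.length = S.length
  · have e := part1 R S hR hS hrel hlen
    rw [e]
    exact e
  · obtain ⟨hRow1, hRow2, hrel2, hback⟩ :=
      SwapProof.key ℓ R S (φ R S).1 (φ R S).2 hR hS hrel (hφ R S hR hS hrel) hlen
    have h2 := hφ (φ R S).1 (φ R S).2 hRow1 hRow2 hrel2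
    obtain ⟨u1, u2⟩ := SwapProof.spec_unique h2 hback
    rw [Prod.ext_iff]
    exact ⟨u1, u2⟩
end

section
/- For the multicone over SL₂ × SL₂ flag varieties with weights λ₁ = ω, λ₂ = ω+ω′, λ₃ = ω′, a tableau of rows of two boxes (each box filled with 1, 2, or empty, but not both empty) is standard if and only if, in each of the two columns, the sequence of integer entries read from top to bottom skipping empty boxes is non-decreasing. -/
namespace Boxes

/-- A box: empty (`none`), filled with `1` (`some false`) or filled with `2`
(`some true`). -/
abbrev Box := Option Bool

/-- The relation on boxes: `i ≤ j` for all pairs except `(i,j) = (2,1)`. -/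
def boxLe (a b : Box) : Prop := ¬ (a = some true ∧ b = some false)

/-- A row consists of two boxes, not both empty. -/
def IsRow2 (r : Box × Box) : Prop := r ≠ (none, none)

/-- The relation `⟵` on rows: the box relation in each of the two columns. -/
def rowRel2 (r s : Box × Box) : Prop := boxLe r.1 s.1 ∧ boxLe r.2 s.2

/-- The swap maps: vertically exchange the empty boxes with the filled ones;
pairs of rows of equal shape are left unchanged. -/
def swap2 : Box × Box → Box × Box → (Box × Box) × (Box × Box)
  | (some i, some j), (some k, none) => ((some i, none), (some k, some j))
  | (some i, none), (some k, some j) => ((some i, some j), (some k, none))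
  | (none, some i), (some j, some k) => ((some j, some i), (none, some k))
  | (some j, some i), (none, some k) => ((none, some i), (some j, some k))
  | (none, some i), (some j, none) => ((some j, none), (none, some i))
  | (some j, none), (none, some i) => ((none, some i), (some j, none))
  | r, s => (r, s)

/-- One application of a swap map to an adjacent comparable pair of rows. -/
def Step2 (T T' : List (Box × Box)) : Prop :=
  ∃ p q r s, rowRel2 r s ∧ T = p ++ r :: s :: q ∧
    T' = p ++ (swap2 r s).1 :: (swap2 r s).2 :: q

/-- A tableau is weakly standard if consecutive rows are comparable; it is
standard if all tableaux obtained from it by repeated adjacent swaps are weakly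
standard. -/
def Std2 (T : List (Box × Box)) : Prop :=
  ∀ T', Relation.ReflTransGen Step2 T T' → T'.Chain' rowRel2

end Boxes

namespace Boxes

-- aux
lemma swap2_col1 (r s : Box × Box) :
    [(swap2 r s).1, (swap2 r s).2].filterMap (fun r => r.1) =
    [r, s].filterMap (fun r => r.1) := by
  rcases r with ⟨_ | a, _ | b⟩ <;> rcases s with ⟨_ | c, _ | d⟩ <;> rfl

lemma swap2_col2 (r s : Box × Box) :
    [(swap2 r s).1, (swap2 r s).2].filterMap (fun r => r.2) =
    [r, s].filterMap (fun r => r.2) := by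
  rcases r with ⟨_ | a, _ | b⟩ <;> rcases s with ⟨_ | c, _ | d⟩ <;> rfl

lemma step_col (f : Box × Box → Box)
    (hf : ∀ r s, [(swap2 r s).1, (swap2 r s).2].filterMap f = [r, s].filterMap f)
    {T T' : List (Box × Box)} (h : Step2 T T') : T'.filterMap f = T.filterMap f := by
  obtain ⟨p, q, r, s, -, hT, hT'⟩ := h
  have key := hf r s
  subst hT hT'
  simp only [List.filterMap_cons, List.filterMap_append] at key ⊢
  cases h1 : f r <;> cases h2 : f s <;> cases h3 : f (swap2 r s).1 <;>
    cases h4 : f (swap2 r s).2 <;> simp_all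

lemma rtg_col (f : Box × Box → Box)
    (hf : ∀ r s, [(swap2 r s).1, (swap2 r s).2].filterMap f = [r, s].filterMap f)
    {T T' : List (Box × Box)} (h : Relation.ReflTransGen Step2 T T') :
    T'.filterMap f = T.filterMap f := by
  induction h with
  | refl => rfl
  | tail _ hstep ih => rw [step_col f hf hstep, ih]

lemma cols_tail (f : Box × Box → Box) (r : Box × Box) (t : List (Box × Box))
    (h : ((r :: t).filterMap f).Chain' (· ≤ ·)) : (t.filterMap f).Chain' (· ≤ ·) := by
  rw [List.filterMap_cons] at h
  cases hr : f r with
  | none => rwa [hr] at h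
  | some a => rw [hr] at h; exact h.tail

lemma boxLe_of_col (f : Box × Box → Box) (r s : Box × Box) (t : List (Box × Box))
    (h : (((r :: s :: t)).filterMap f).Chain' (· ≤ ·)) : boxLe (f r) (f s) := by
  rintro ⟨h1, h2⟩
  rw [List.filterMap_cons, List.filterMap_cons, h1, h2] at h
  exact absurd (List.isChain_cons_cons.mp h).1 (by decide)

lemma chain_of_cols (T : List (Box × Box))
    (h1 : (T.filterMap (fun r => r.1)).Chain' (· ≤ ·))
    (h2 : (T.filterMap (fun r => r.2)).Chain' (· ≤ ·)) :
    T.Chain' rowRel2 := by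
  induction T with
  | nil => simp [List.Chain', List.isChain_nil]
  | cons r t ih =>
    have ht := ih (cols_tail _ r t h1) (cols_tail _ r t h2)
    cases t with
    | nil => simp [List.Chain', List.isChain_singleton]
    | cons s t' =>
      exact List.isChain_cons_cons.mpr
        ⟨⟨boxLe_of_col _ r s t' h1, boxLe_of_col _ r s t' h2⟩, ht⟩

lemma step2_cons {r : Box × Box} {t u : List (Box × Box)} (h : Step2 t u) :
    Step2 (r :: t) (r :: u) := by
  obtain ⟨p, q, a, b, hab, ht, hu⟩ := h
  exact ⟨r :: p, q, a, b, hab, by simp [ht], by simp [hu]⟩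

lemma rtg_cons {r : Box × Box} {t u : List (Box × Box)}
    (h : Relation.ReflTransGen Step2 t u) :
    Relation.ReflTransGen Step2 (r :: t) (r :: u) := by
  induction h with
  | refl => exact .refl
  | tail _ hstep ih => exact ih.tail (step2_cons hstep)

lemma Std2.tail {r : Box × Box} {t : List (Box × Box)} (h : Std2 (r :: t)) : Std2 t :=
  fun T' hT' => (h (r :: T') (rtg_cons hT')).tail

lemma Std2.of_step {T T' : List (Box × Box)} (h : Std2 T) (hs : Step2 T T') : Std2 T' :=
  fun U hU => h U (Relation.ReflTransGen.head hs hU)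

lemma decomp (f : Box × Box → Box) (t : List (Box × Box)) (b : Bool) (L : List Bool)
    (h : t.filterMap f = b :: L) :
    ∃ m w t'', t = m ++ w :: t'' ∧ (∀ u ∈ m, f u = none) ∧ f w = some b := by
  induction t generalizing b L with
  | nil => simp at h
  | cons r t ih =>
    cases hr : f r with
    | some a =>
      simp only [List.filterMap_cons, hr] at h
      injection h with h1 h2
      exact ⟨[], r, t, rfl, by simp, h1 ▸ hr⟩
    | none =>
      simp only [List.filterMap_cons, hr] at h
      obtain ⟨m, w, t'', rfl, hm, hw⟩ := ih b L h
      refine ⟨r :: m, w, t'', rfl, ?_, hw⟩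
      intro u hu
      rcases List.mem_cons.mp hu with rfl | hu
      · exact hr
      · exact hm u hu


lemma descent1 (m : List (Box × Box)) :
    ∀ (r w : Box × Box) (t : List (Box × Box)), r.1 = some true → w.1 = some false →
    (∀ u ∈ m, u.1 = none ∧ u ≠ (none, none)) → ¬ Std2 (r :: (m ++ w :: t)) := by
  induction m with
  | nil =>
    intro r w t hr hw _ hstd
    have hc := hstd _ Relation.ReflTransGen.refl
    simp only [List.nil_append] at hc
    exact (List.isChain_cons_cons.mp hc).1.1 ⟨hr, hw⟩
  | cons u m' ih =>
    intro r w t hr hw hm hstd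
    obtain ⟨hu1, hu2⟩ := hm u (by simp)
    obtain ⟨a, b⟩ := r
    obtain ⟨c, d⟩ := u
    simp only at hr hu1
    subst hr hu1
    cases d with
    | none => exact hu2 rfl
    | some x =>
      by_cases hbad : b = some true ∧ x = false
      · obtain ⟨rfl, rfl⟩ := hbad
        have hc := hstd _ Relation.ReflTransGen.refl
        simp only [List.cons_append] at hc
        exact (List.isChain_cons_cons.mp hc).1.2 ⟨rfl, rfl⟩
      · have hrel : rowRel2 (some true, b) (none, some x) := by
          constructor
          · rintro ⟨-, h2⟩; simp at h2
          · rintro ⟨h1, h2⟩; exact hbad ⟨h1, Option.some.inj h2⟩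
        have hstep : Step2 ((some true, b) :: ((none, some x) :: m') ++ w :: t)
            ((swap2 (some true, b) (none, some x)).1 ::
              (swap2 (some true, b) (none, some x)).2 :: (m' ++ w :: t)) :=
          ⟨[], m' ++ w :: t, (some true, b), (none, some x), hrel, by simp, by simp⟩
        have hstd2 := (Std2.of_step hstd hstep).tail
        have hm' : ∀ u ∈ m', u.1 = none ∧ u ≠ (none, none) :=
          fun v hv => hm v (by simp [hv])
        cases b with
        | none => exact ih (some true, none) w t rfl hw hm' hstd2
        | some j => exact ih (some true, some x) w t rfl hw hm' hstd2

lemma descent2 (m : List (Box × Box)) :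
    ∀ (r w : Box × Box) (t : List (Box × Box)), r.2 = some true → w.2 = some false →
    (∀ u ∈ m, u.2 = none ∧ u ≠ (none, none)) → ¬ Std2 (r :: (m ++ w :: t)) := by
  induction m with
  | nil =>
    intro r w t hr hw _ hstd
    have hc := hstd _ Relation.ReflTransGen.refl
    simp only [List.nil_append] at hc
    exact (List.isChain_cons_cons.mp hc).1.2 ⟨hr, hw⟩
  | cons u m' ih =>
    intro r w t hr hw hm hstd
    obtain ⟨hu1, hu2⟩ := hm u (by simp)
    obtain ⟨a, b⟩ := r
    obtain ⟨c, d⟩ := u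
    simp only at hr hu1
    subst hr hu1
    cases c with
    | none => exact hu2 rfl
    | some x =>
      by_cases hbad : a = some true ∧ x = false
      · obtain ⟨rfl, rfl⟩ := hbad
        have hc := hstd _ Relation.ReflTransGen.refl
        simp only [List.cons_append] at hc
        exact (List.isChain_cons_cons.mp hc).1.1 ⟨rfl, rfl⟩
      · have hrel : rowRel2 (a, some true) (some x, none) := by
          constructor
          · rintro ⟨h1, h2⟩; exact hbad ⟨h1, Option.some.inj h2⟩
          · rintro ⟨-, h2⟩; simp at h2
        have hstep : Step2 ((a, some true) :: ((some x, none) :: m') ++ w :: t)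
            ((swap2 (a, some true) (some x, none)).1 ::
              (swap2 (a, some true) (some x, none)).2 :: (m' ++ w :: t)) :=
          ⟨[], m' ++ w :: t, (a, some true), (some x, none), hrel, by simp, by simp⟩
        have hstd2 := (Std2.of_step hstd hstep).tail
        have hm' : ∀ u ∈ m', u.2 = none ∧ u ≠ (none, none) :=
          fun v hv => hm v (by simp [hv])
        cases a with
        | none => exact ih (none, some true) w t rfl hw hm' hstd2
        | some j => exact ih (some x, some true) w t rfl hw hm' hstd2


lemma std_to_cols : ∀ (T : List (Box × Box)), (∀ r ∈ T, IsRow2 r) → Std2 T →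
    (T.filterMap (fun r => r.1)).Chain' (· ≤ ·) ∧
    (T.filterMap (fun r => r.2)).Chain' (· ≤ ·) := by
  intro T
  induction T with
  | nil => simp [List.Chain', List.isChain_nil]
  | cons r t ih =>
    intro hT hstd
    obtain ⟨h1, h2⟩ := ih (fun u hu => hT u (List.mem_cons_of_mem _ hu)) hstd.tail
    constructor
    · rw [List.filterMap_cons]
      cases hr : r.1 with
      | none => exact h1
      | some a =>
        unfold List.Chain'; rw [List.isChain_cons]
        refine ⟨?_, h1⟩
        intro b hb
        by_contra hab
        obtain ⟨rfl, rfl⟩ : a = true ∧ b = false := by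
          cases a <;> cases b <;> simp_all
        have hhd := hb
        obtain ⟨L, hL⟩ : ∃ L, t.filterMap (fun r => r.1) = false :: L := by
          cases hl : t.filterMap (fun r => r.1) with
          | nil => rw [hl] at hhd; exact absurd hhd (by simp)
          | cons c L =>
            rw [hl] at hhd
            exact ⟨L, by rw [hl, List.head?_cons] at *; injection hhd with h; rw [h]⟩
        obtain ⟨m, w, t'', rfl, hm, hw⟩ := decomp _ t false L hL
        refine descent1 m r w t'' hr hw (fun u hu => ⟨hm u hu, ?_⟩) hstd
        exact hT u (by simp [hu])
    · rw [List.filterMap_cons]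
      cases hr : r.2 with
      | none => exact h2
      | some a =>
        unfold List.Chain'; rw [List.isChain_cons]
        refine ⟨?_, h2⟩
        intro b hb
        by_contra hab
        obtain ⟨rfl, rfl⟩ : a = true ∧ b = false := by
          cases a <;> cases b <;> simp_all
        have hhd := hb
        obtain ⟨L, hL⟩ : ∃ L, t.filterMap (fun r => r.2) = false :: L := by
          cases hl : t.filterMap (fun r => r.2) with
          | nil => rw [hl] at hhd; exact absurd hhd (by simp)
          | cons c L =>
            rw [hl] at hhd
            exact ⟨L, by rw [hl, List.head?_cons] at *; injection hhd with h; rw [h]⟩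
        obtain ⟨m, w, t'', rfl, hm, hw⟩ := decomp _ t false L hL
        refine descent2 m r w t'' hr hw (fun u hu => ⟨hm u hu, ?_⟩) hstd
        exact hT u (by simp [hu])

end Boxes


open Boxes in
/-- For the multicone over `SL₂ × SL₂` flag varieties with weights
`λ₁ = ω, λ₂ = ω + ω′, λ₃ = ω′`, a tableau of rows of two boxes (each box filled
with `1`, `2` or empty, but not both empty) is standard if and only if, in each
of the two columns, the sequence of integer entries read from top to bottom
skipping the empty boxes is non-decreasing. -/
theorem standard_iff_columns_nondecreasing (T : List (Box × Box))
    (hT : ∀ r ∈ T, IsRow2 r) :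
    Std2 T ↔
      (T.filterMap (fun r => r.1)).Chain' (· ≤ ·) ∧
      (T.filterMap (fun r => r.2)).Chain' (· ≤ ·) := by
  constructor
  · exact std_to_cols T hT
  · rintro ⟨h1, h2⟩ T' hT'
    refine chain_of_cols T' ?_ ?_
    · rw [rtg_col _ swap2_col1 hT']; exact h1
    · rw [rtg_col _ swap2_col2 hT']; exact h2
end
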